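/- arXiv:1705.09385 — 6 statements merged into one kernel-verified Lean document; each statement's English description precedes it below -/
import Mathlib

section
/- If G is the graph formed by joining t ≥ 1 internally disjoint paths of equal length at least 3, all with the same endpoints a and b, then the shortest path graph S(G,a,b) is the empty graph on t vertices (t vertices and no edges). -/
open SimpleGraph

/-- The type of `a,b`-geodesics in `G`: paths from `a` to `b` of length `d_G(a,b)`. -/
def Geodesic {V : Type*} (G : SimpleGraph V) (a b : V) : Type _ :=
  {p : G.Walk a b // p.IsPath ∧ p.length = G.dist a b}

/-- Two geodesics differ at exactly the index `i` (comparing vertex sequences). -/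
def DiffAt {V : Type*} {G : SimpleGraph V} {a b : V} (U W : Geodesic G a b) (i : ℕ) : Prop :=
  U.1.support.getD i a ≠ W.1.support.getD i a ∧
    ∀ j, j ≠ i → U.1.support.getD j a = W.1.support.getD j a

/-- The shortest path graph `S(G,a,b)`: vertices are `a,b`-geodesics, adjacent iff their
vertex sequences differ in exactly one position. -/
def SPG {V : Type*} (G : SimpleGraph V) (a b : V) : SimpleGraph (Geodesic G a b) where
  Adj U W := ∃ i, DiffAt U W i
  symm := by
    constructor
    rintro U W ⟨i, hne, hj⟩
    exact ⟨i, hne.symm, fun j hji => (hj j hji).symm⟩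
  loopless := by
    constructor
    rintro U ⟨i, hne, -⟩
    exact hne rfl

/-- A graph is a shortest path graph if it is isomorphic to `S(G,a,b)` for some `G`, `a ≠ b`. -/
def IsSPGraph {α : Type*} (H : SimpleGraph α) : Prop :=
  ∃ (V : Type) (G : SimpleGraph V) (a b : V), a ≠ b ∧ Nonempty (H ≃g SPG G a b)

/-- The graph formed by joining `t` internally disjoint paths of equal length `ℓ`,
all with endpoints `a = Sum.inr false` and `b = Sum.inr true`; the internal vertices of
the `i`-th path are `(i, 0), …, (i, ℓ-2)`. -/
def thetaGraph (t ℓ : ℕ) : SimpleGraph ((Fin t × Fin (ℓ - 1)) ⊕ Bool) :=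
  SimpleGraph.fromRel (fun u v =>
    match u, v with
    | Sum.inr false, Sum.inl (_, j) => j.val = 0
    | Sum.inl (i, j), Sum.inl (i', j') => i = i' ∧ j'.val = j.val + 1
    | Sum.inl (_, j), Sum.inr true => j.val = ℓ - 2
    | _, _ => False)

namespace ThetaAux
variable {t ℓ : ℕ}

def φ (ℓ : ℕ) : (Fin t × Fin (ℓ - 1)) ⊕ Bool → ℕ
  | Sum.inr false => 0
  | Sum.inl (_, j) => j.val + 1
  | Sum.inr true => ℓ

/-- classification of adjacency -/
lemma adj_cases {u v : (Fin t × Fin (ℓ - 1)) ⊕ Bool} (h : (thetaGraph t ℓ).Adj u v) :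
    (∃ i j, (u = Sum.inr false ∧ v = Sum.inl (i, j) ∧ j.val = 0) ∨
            (v = Sum.inr false ∧ u = Sum.inl (i, j) ∧ j.val = 0) ∨
            (u = Sum.inl (i, j) ∧ v = Sum.inr true ∧ j.val = ℓ - 2) ∨
            (v = Sum.inl (i, j) ∧ u = Sum.inr true ∧ j.val = ℓ - 2)) ∨
    (∃ i j j', (u = Sum.inl (i, j) ∧ v = Sum.inl (i, j') ∧ j'.val = j.val + 1) ∨
               (v = Sum.inl (i, j) ∧ u = Sum.inl (i, j') ∧ j'.val = j.val + 1)) := by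
  rw [thetaGraph, SimpleGraph.fromRel_adj] at h
  obtain ⟨-, h | h⟩ := h
  · match u, v with
    | Sum.inr false, Sum.inl (i, j) => exact Or.inl ⟨i, j, Or.inl ⟨rfl, rfl, h⟩⟩
    | Sum.inl (i, j), Sum.inl (i', j') =>
        exact Or.inr ⟨i, j, j', Or.inl ⟨rfl, by rw [h.1], h.2⟩⟩
    | Sum.inl (i, j), Sum.inr true => exact Or.inl ⟨i, j, Or.inr (Or.inr (Or.inl ⟨rfl, rfl, h⟩))⟩
  · match u, v with
    | Sum.inl (i, j), Sum.inr false => exact Or.inl ⟨i, j, Or.inr (Or.inl ⟨rfl, rfl, h⟩)⟩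
    | Sum.inl (i', j'), Sum.inl (i, j) =>
        exact Or.inr ⟨i, j, j', Or.inr ⟨rfl, by rw [h.1], h.2⟩⟩
    | Sum.inr true, Sum.inl (i, j) => exact Or.inl ⟨i, j, Or.inr (Or.inr (Or.inr ⟨rfl, rfl, h⟩))⟩

lemma phi_adj {u v : (Fin t × Fin (ℓ - 1)) ⊕ Bool} (hℓ : 3 ≤ ℓ)
    (h : (thetaGraph t ℓ).Adj u v) : φ ℓ v ≤ φ ℓ u + 1 ∧ φ ℓ u ≤ φ ℓ v + 1 := by
  rcases adj_cases h with ⟨i, j, H | H | H | H⟩ | ⟨i, j, j', H | H⟩ <;>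
    obtain ⟨rfl, rfl, hj⟩ := H <;> simp [φ] <;> omega

lemma adj_succ (i : Fin t) (j j' : Fin (ℓ - 1)) (hj : j'.val = j.val + 1) :
    (thetaGraph t ℓ).Adj (Sum.inl (i, j)) (Sum.inl (i, j')) := by
  simp [thetaGraph, SimpleGraph.fromRel_adj, hj]
  omega

lemma adj_top (i : Fin t) (j : Fin (ℓ - 1)) (hj : j.val = ℓ - 2) :
    (thetaGraph t ℓ).Adj (Sum.inl (i, j)) (Sum.inr true) := by
  simp [thetaGraph, SimpleGraph.fromRel_adj, hj]

lemma adj_bot (i : Fin t) (j : Fin (ℓ - 1)) (hj : j.val = 0) :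
    (thetaGraph t ℓ).Adj (Sum.inr false) (Sum.inl (i, j)) := by
  simp [thetaGraph, SimpleGraph.fromRel_adj, hj]

/-- the canonical tail from an internal vertex to `b` -/
def pathAux (i : Fin t) : (m : ℕ) → (j : Fin (ℓ - 1)) → j.val + m = ℓ - 2 →
    (thetaGraph t ℓ).Walk (Sum.inl (i, j)) (Sum.inr true)
  | 0, j, hm => Walk.cons (adj_top i j (by omega)) Walk.nil
  | m + 1, j, hm => Walk.cons
      (adj_succ i j ⟨j.val + 1, by omega⟩ rfl)
      (pathAux i m ⟨j.val + 1, by omega⟩ (by simp; omega))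

lemma pathAux_length (i : Fin t) : ∀ (m : ℕ) (j : Fin (ℓ - 1)) (hm : j.val + m = ℓ - 2),
    (pathAux i m j hm).length = m + 1
  | 0, j, hm => by simp [pathAux]
  | m + 1, j, hm => by simp [pathAux, pathAux_length i m]

lemma pathAux_mem (i : Fin t) : ∀ (m : ℕ) (j : Fin (ℓ - 1)) (hm : j.val + m = ℓ - 2)
    (x : _) (hx : x ∈ (pathAux i m j hm).support),
    x = Sum.inr true ∨ ∃ j' : Fin (ℓ - 1), x = Sum.inl (i, j') ∧ j.val ≤ j'.val
  | 0, j, hm, x, hx => by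
    simp [pathAux] at hx
    rcases hx with rfl | rfl
    · exact Or.inr ⟨j, rfl, le_refl _⟩
    · exact Or.inl rfl
  | m + 1, j, hm, x, hx => by
    simp only [pathAux, Walk.support_cons, List.mem_cons] at hx
    rcases hx with rfl | hx
    · exact Or.inr ⟨j, rfl, le_refl _⟩
    · rcases pathAux_mem i m _ _ x hx with h | ⟨j', hj', hle⟩
      · exact Or.inl h
      · exact Or.inr ⟨j', hj', by simp at hle; omega⟩

lemma pathAux_nodup (i : Fin t) : ∀ (m : ℕ) (j : Fin (ℓ - 1)) (hm : j.val + m = ℓ - 2),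
    (pathAux i m j hm).support.Nodup
  | 0, j, hm => by simp [pathAux]
  | m + 1, j, hm => by
    simp only [pathAux, Walk.support_cons, List.nodup_cons]
    refine ⟨fun hx => ?_, pathAux_nodup i m _ _⟩
    rcases pathAux_mem i m _ _ _ hx with h | ⟨j', hj', hle⟩
    · exact absurd h (by simp)
    · have := Sum.inl.inj hj'
      have : j = j' := (Prod.mk.injEq .. ▸ this).2
      simp at hle; omega

lemma pathAux_getD (i : Fin t) (x : (Fin t × Fin (ℓ - 1)) ⊕ Bool) :
    ∀ (m : ℕ) (j : Fin (ℓ - 1)) (hm : j.val + m = ℓ - 2) (k : ℕ) (hk : k ≤ m),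
    (pathAux i m j hm).support.getD k x = Sum.inl (i, ⟨j.val + k, by omega⟩)
  | 0, j, hm, 0, hk => by simp [pathAux]
  | m + 1, j, hm, 0, hk => by simp [pathAux]
  | m + 1, j, hm, k + 1, hk => by
    simp only [pathAux, Walk.support_cons, List.getD_cons_succ]
    rw [pathAux_getD i x m _ _ k (by omega)]
    refine congrArg (fun v => Sum.inl (i, v)) (Fin.ext ?_)
    simp
    omega

end ThetaAux

namespace ThetaAux
variable {t ℓ : ℕ}

/-- lower bound: any walk to `b` has length ≥ ℓ - φ v -/
lemma low (hℓ : 3 ≤ ℓ) : ∀ {v : (Fin t × Fin (ℓ - 1)) ⊕ Bool}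
    (p : (thetaGraph t ℓ).Walk v (Sum.inr true)), ℓ ≤ φ ℓ v + p.length
  | _, Walk.nil => by simp [φ]
  | _, Walk.cons h q => by
    obtain ⟨h1a, h1b⟩ := phi_adj hℓ h
    have h2 := low hℓ q
    simp only [Walk.length_cons]
    omega

def pathFull (hℓ : 3 ≤ ℓ) (i : Fin t) :
    (thetaGraph t ℓ).Walk (Sum.inr false) (Sum.inr true) :=
  Walk.cons (adj_bot i ⟨0, by omega⟩ rfl) (pathAux i (ℓ - 2) ⟨0, by omega⟩ (by simp))

lemma pathFull_length (hℓ : 3 ≤ ℓ) (i : Fin t) : (pathFull hℓ i).length = ℓ := by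
  simp [pathFull, pathAux_length]
  omega

lemma dist_eq (hℓ : 3 ≤ ℓ) (ht : 1 ≤ t) :
    (thetaGraph t ℓ).dist (Sum.inr false) (Sum.inr true) = ℓ := by
  have i : Fin t := ⟨0, ht⟩
  have h1 : (thetaGraph t ℓ).dist (Sum.inr false) (Sum.inr true) ≤ ℓ :=
    le_trans (SimpleGraph.dist_le (pathFull hℓ i)) (le_of_eq (pathFull_length hℓ i))
  have hr : (thetaGraph t ℓ).Reachable (Sum.inr false) (Sum.inr true) := ⟨pathFull hℓ i⟩
  obtain ⟨p, hp⟩ := hr.exists_walk_length_eq_dist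
  have h2 := low hℓ p
  simp only [φ] at h2
  omega

lemma pathFull_isPath (hℓ : 3 ≤ ℓ) (i : Fin t) : (pathFull hℓ i).IsPath := by
  rw [Walk.isPath_def, pathFull, Walk.support_cons, List.nodup_cons]
  refine ⟨fun hx => ?_, pathAux_nodup i _ _ _⟩
  rcases pathAux_mem i _ _ _ _ hx with h | ⟨j', hj', -⟩ <;> simp_all

/-- rigidity: a walk of exactly the right length from an internal vertex is `pathAux`. -/
lemma rigid (hℓ : 3 ≤ ℓ) (i : Fin t) : ∀ (m : ℕ) (j : Fin (ℓ - 1)) (hm : j.val + m = ℓ - 2)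
    (p : (thetaGraph t ℓ).Walk (Sum.inl (i, j)) (Sum.inr true)) (hp : p.length = m + 1),
    p = pathAux i m j hm
  | m, j, hm, Walk.cons (v := w) h q, hp => by
    have hql : q.length = m := by simpa using hp
    have hlow := low hℓ q
    have hphi : j.val + 2 ≤ φ ℓ w := by
      simp only [φ] at hlow ⊢; omega
    rcases adj_cases h with ⟨i', ja, H1 | H2 | H3 | H4⟩ | ⟨i', ja, jb, H5 | H6⟩
    · exact absurd H1.1 (by simp)
    · obtain ⟨rfl, -, -⟩ := H2
      simp [φ] at hphi
    · obtain ⟨hu, rfl, hj⟩ := H3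
      simp only [Sum.inl.injEq, Prod.mk.injEq] at hu
      obtain ⟨rfl, rfl⟩ := hu
      have hm0 : m = 0 := by omega
      subst hm0
      have : q = Walk.nil := Walk.nil_iff_eq_nil.mp (Walk.length_eq_zero_iff.mp hql)
      subst this
      rfl
    · exact absurd H4.2.1 (by simp)
    · obtain ⟨hu, rfl, hj⟩ := H5
      simp only [Sum.inl.injEq, Prod.mk.injEq] at hu
      obtain ⟨rfl, rfl⟩ := hu
      have hlt := jb.isLt
      have hm0 : m ≠ 0 := by omega
      obtain ⟨m', rfl⟩ : ∃ m', m = m' + 1 := ⟨m - 1, by omega⟩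
      have hx : j.val + 1 < ℓ - 1 := by omega
      obtain rfl : jb = ⟨j.val + 1, hx⟩ := Fin.ext (by simpa using hj)
      rw [rigid hℓ i m' ⟨j.val + 1, hx⟩ (by simp; omega) q hql]
      rfl
    · obtain ⟨rfl, hu, hj⟩ := H6
      simp only [Sum.inl.injEq, Prod.mk.injEq] at hu
      obtain ⟨rfl, rfl⟩ := hu
      simp only [φ] at hphi
      omega

end ThetaAux

namespace ThetaAux
variable {t ℓ : ℕ}

lemma rigid_full (hℓ : 3 ≤ ℓ)
    (p : (thetaGraph t ℓ).Walk (Sum.inr false) (Sum.inr true)) (hp : p.length = ℓ) :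
    ∃ i, p = pathFull hℓ i := by
  cases p with
  | cons h q =>
    rename_i w
    rcases adj_cases h with ⟨i', ja, H1 | H2 | H3 | H4⟩ | ⟨i', ja, jb, H5 | H6⟩
    · obtain ⟨-, rfl, hj⟩ := H1
      refine ⟨i', ?_⟩
      have hx0 : 0 < ℓ - 1 := by omega
      obtain rfl : ja = ⟨0, hx0⟩ := Fin.ext (by simpa using hj)
      have hql : q.length = (ℓ - 2) + 1 := by
        have := Walk.length_cons h q ▸ hp; omega
      rw [pathFull, rigid hℓ i' (ℓ - 2) ⟨0, hx0⟩ (by simp) q hql]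
    · exact absurd H2.2.1 (by simp)
    · exact absurd H3.1 (by simp)
    · exact absurd H4.2.1 (by simp)
    · exact absurd H5.1 (by simp)
    · exact absurd H6.2.1 (by simp)

lemma pathFull_getD (hℓ : 3 ≤ ℓ) (i : Fin t) (x) (k : ℕ) (hk : 1 ≤ k) (hk' : k ≤ ℓ - 1) :
    (pathFull hℓ i).support.getD k x = Sum.inl (i, ⟨k - 1, by omega⟩) := by
  obtain ⟨k, rfl⟩ : ∃ k', k = k' + 1 := ⟨k - 1, by omega⟩
  rw [pathFull, Walk.support_cons, List.getD_cons_succ,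
    pathAux_getD i x (ℓ - 2) ⟨0, by omega⟩ (by simp) k (by omega)]
  exact congrArg (fun v => Sum.inl (i, v)) (Fin.ext (by simp))

end ThetaAux

open ThetaAux

theorem stmt0 (t ℓ : ℕ) (ht : 1 ≤ t) (hℓ : 3 ≤ ℓ) :
    Nonempty (SPG (thetaGraph t ℓ) (Sum.inr false) (Sum.inr true) ≃g
      (⊥ : SimpleGraph (Fin t))) := by
  set G := thetaGraph t ℓ with hG
  have hdist := dist_eq (t := t) hℓ ht
  -- the canonical geodesics
  have hgeo : ∀ i : Fin t, (pathFull hℓ i).IsPath ∧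
      (pathFull hℓ i).length = G.dist (Sum.inr false) (Sum.inr true) := fun i =>
    ⟨pathFull_isPath hℓ i, by rw [pathFull_length, hdist]⟩
  let f : Fin t → Geodesic G (Sum.inr false) (Sum.inr true) := fun i => ⟨pathFull hℓ i, hgeo i⟩
  -- every geodesic is canonical
  have hsurj : ∀ p : Geodesic G (Sum.inr false) (Sum.inr true), ∃ i, p = f i := by
    rintro ⟨p, hp, hlen⟩
    obtain ⟨i, rfl⟩ := rigid_full hℓ p (by rw [hlen, hdist])
    exact ⟨i, rfl⟩
  have hget : ∀ (i : Fin t) (k : ℕ) (h1 : 1 ≤ k) (h2 : k ≤ ℓ - 1),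
      (f i).1.support.getD k (Sum.inr false) = Sum.inl (i, ⟨k - 1, by omega⟩) := fun i k h1 h2 =>
    pathFull_getD hℓ i _ k h1 h2
  have hinj : Function.Injective f := by
    intro i i' hii
    have h1 := hget i 1 le_rfl (by omega)
    have h2 := hget i' 1 le_rfl (by omega)
    rw [hii, h2] at h1
    exact (Prod.mk.injEq .. ▸ Sum.inl.inj h1.symm).1
  have hbij : Function.Bijective f := ⟨hinj, fun p => (hsurj p).imp fun i h => h.symm⟩
  let e := Equiv.ofBijective f hbij
  -- no adjacency in SPG
  have hno : ∀ U W, ¬ (SPG G (Sum.inr false) (Sum.inr true)).Adj U W := by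
    rintro U W ⟨k, hne, hall⟩
    obtain ⟨i, rfl⟩ := hsurj U
    obtain ⟨i', rfl⟩ := hsurj W
    rcases eq_or_ne i i' with rfl | hii
    · exact hne rfl
    · have hd : ∀ m : ℕ, 1 ≤ m → m ≤ ℓ - 1 →
          (f i).1.support.getD m (Sum.inr false) ≠ (f i').1.support.getD m (Sum.inr false) := by
        intro m h1 h2
        rw [hget i m h1 h2, hget i' m h1 h2]
        simp [hii]
      rcases eq_or_ne k 1 with rfl | hk1
      · exact hd 2 (by omega) (by omega) (hall 2 (by omega))
      · exact hd 1 le_rfl (by omega) (hall 1 (Ne.symm hk1))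
  exact ⟨{ toEquiv := e.symm,
           map_rel_iff' := by
             intro U W
             simp only [SimpleGraph.bot_adj, false_iff]
             exact hno U W }⟩
end

section
/- For every k ≥ 1, the path graph P_k on k edges (k+1 vertices) arises as a shortest path graph; that is, there exists a graph G with vertices a,b such that S(G,a,b) is isomorphic to P_k. -/
open SimpleGraph

namespace SPGPath

variable (k : ℕ)

abbrev Vk : Type := Fin 2 ⊕ (Fin (k/2 + 1) ⊕ Fin ((k+1)/2 + 1))

def av : Vk k := .inl 0
def bv : Vk k := .inl 1
def xv (i : Fin (k/2 + 1)) : Vk k := .inr (.inl i)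
def yv (j : Fin ((k+1)/2 + 1)) : Vk k := .inr (.inr j)

def rel : Vk k → Vk k → Prop
  | .inl u, .inr (.inl _) => u = 0
  | .inr (.inl _), .inl u => u = 0
  | .inl u, .inr (.inr _) => u = 1
  | .inr (.inr _), .inl u => u = 1
  | .inr (.inl i), .inr (.inr j) => j.1 = i.1 ∨ j.1 = i.1 + 1
  | .inr (.inr j), .inr (.inl i) => j.1 = i.1 ∨ j.1 = i.1 + 1
  | _, _ => False

def Gk : SimpleGraph (Vk k) where
  Adj := rel k
  symm := by constructor; rintro (u|i|j) (v|i'|j') h <;> simp_all [rel]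
  loopless := by constructor; rintro (u|i|j) h <;> simp_all [rel]

def lvl : Vk k → ℕ
  | .inl u => if u = 0 then 0 else 3
  | .inr (.inl _) => 1
  | .inr (.inr _) => 2

lemma lvl_le {u v : Vk k} (h : rel k u v) : lvl k v ≤ lvl k u + 1 := by
  rcases u with u|i|j <;> rcases v with v|i'|j' <;> simp_all [rel, lvl]

lemma lvl_bv : lvl k (bv k) = 3 := rfl
lemma lvl_av : lvl k (av k) = 0 := rfl

lemma lvl_le_walk : ∀ {u w : Vk k} (p : (Gk k).Walk u w), lvl k w ≤ lvl k u + p.length := by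
  intro u w p
  induction p with
  | nil => simp
  | @cons u v w h q ih =>
      have := lvl_le k h
      simp only [Walk.length_cons]
      omega

lemma adj_ax (i) : (Gk k).Adj (av k) (xv k i) := rfl
lemma adj_yb (j) : (Gk k).Adj (yv k j) (bv k) := rfl
lemma adj_xy (i j) (h : j.1 = i.1 ∨ j.1 = i.1 + 1) : (Gk k).Adj (xv k i) (yv k j) := h

/-- the walk a — x i — y j — b, given the edge between `x i` and `y j` -/
def gwalk (i : Fin (k/2 + 1)) (j : Fin ((k+1)/2 + 1)) (h : j.1 = i.1 ∨ j.1 = i.1 + 1) :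
    (Gk k).Walk (av k) (bv k) :=
  Walk.cons (adj_ax k i) (Walk.cons (adj_xy k i j h) (Walk.cons (adj_yb k j) Walk.nil))

lemma support_gwalk (i j h) : (gwalk k i j h).support = [av k, xv k i, yv k j, bv k] := rfl

lemma length_gwalk (i j h) : (gwalk k i j h).length = 3 := rfl

lemma dist_eq : (Gk k).dist (av k) (bv k) = 3 := by
  have hle : (Gk k).dist (av k) (bv k) ≤ 3 :=
    (SimpleGraph.dist_le (gwalk k ⟨0, Nat.succ_pos _⟩ ⟨0, Nat.succ_pos _⟩ (Or.inl rfl))).trans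
      (by simp [length_gwalk])
  have hre : (Gk k).Reachable (av k) (bv k) :=
    ⟨gwalk k ⟨0, Nat.succ_pos _⟩ ⟨0, Nat.succ_pos _⟩ (Or.inl rfl)⟩
  obtain ⟨p, hp⟩ := hre.exists_walk_length_eq_dist
  have := lvl_le_walk k p
  rw [lvl_av, lvl_bv] at this
  omega

lemma walk_classify (p : (Gk k).Walk (av k) (bv k)) (hl : p.length = 3) :
    ∃ i j h, p = gwalk k i j h := by
  cases p with
  | @cons _ v _ h q =>
      rcases v with u | i | j
      · simp [Gk, rel, av, bv] at h
      · -- v = x i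
        cases q with
        | @cons _ w _ h' q' =>
            rcases w with u | i' | j
            · -- back to an inl vertex; then remaining walk has length 1 ending at bv
              cases q' with
              | nil => change 2 = 3 at hl; omega
              | @cons _ z _ h'' q'' =>
                  cases q'' with
                  | nil =>
                      -- h'' : Adj (inl u) (inl 1) : False
                      simp [Gk, rel, av, bv] at h''
                  | cons _ _ => simp at hl
            · simp [Gk, rel, av, bv] at h'
            · -- w = y j
              cases q' with
              | @cons _ z _ h'' q'' =>
                  cases q'' with
                  | nil =>
                      refine ⟨i, j, h', ?_⟩
                      rfl
                  | cons _ _ => simp at hl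
      · simp [Gk, rel, av, bv] at h

lemma gwalk_isPath (i j h) : (gwalk k i j h).IsPath := by
  rw [Walk.isPath_def, support_gwalk]
  simp [av, bv, xv, yv]

lemma gwalk_congr (i i' j j' h h') (hi : i.1 = i'.1) (hj : j.1 = j'.1) :
    gwalk k i j h = gwalk k i' j' h' := by
  obtain rfl : i = i' := Fin.ext hi
  obtain rfl : j = j' := Fin.ext hj
  rfl

/-- the geodesic indexed by `n : Fin (k+1)` -/
def geo (n : Fin (k + 1)) : Geodesic (Gk k) (av k) (bv k) :=
  ⟨gwalk k ⟨n.1 / 2, by omega⟩ ⟨(n.1 + 1) / 2, by omega⟩ (by simp; omega),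
    gwalk_isPath k _ _ _, by rw [length_gwalk, dist_eq]⟩

lemma geo_bijective : Function.Bijective (geo k) := by
  constructor
  · intro n m hnm
    have h1 := congrArg (fun p => p.1.support) hnm
    simp only [geo, support_gwalk, xv, yv] at h1
    have hn : n.1 / 2 = m.1 / 2 ∧ (n.1 + 1) / 2 = (m.1 + 1) / 2 := by
      simpa [Fin.ext_iff] using h1
    have : n.1 = m.1 := by omega
    exact Fin.ext this
  · rintro ⟨p, hp, hlen⟩
    rw [dist_eq] at hlen
    obtain ⟨i, j, h, rfl⟩ := walk_classify k p hlen
    have hb : i.1 + j.1 < k + 1 := by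
      have h1 := i.2; have h2 := j.2
      omega
    refine ⟨⟨i.1 + j.1, hb⟩, ?_⟩
    apply Subtype.ext
    refine gwalk_congr k _ i _ j ?_ h ?_ ?_ <;> simp <;> omega

lemma support_geo (n : Fin (k + 1)) :
    (geo k n).1.support =
      [av k, xv k ⟨n.1 / 2, by omega⟩, yv k ⟨(n.1 + 1) / 2, by omega⟩, bv k] := rfl

lemma adj_char (n m : Fin (k + 1)) :
    (SPG (Gk k) (av k) (bv k)).Adj (geo k n) (geo k m) ↔
      (n.1 / 2 = m.1 / 2 ∧ (n.1 + 1) / 2 ≠ (m.1 + 1) / 2) ∨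
        (n.1 / 2 ≠ m.1 / 2 ∧ (n.1 + 1) / 2 = (m.1 + 1) / 2) := by
  constructor
  · rintro ⟨i, hne, hall⟩
    simp only [DiffAt, support_geo] at hne hall
    rcases i with _|_|_|_|i
    · simp [List.getD] at hne
    · have h2 := hall 2 (by omega)
      simp only [List.getD, List.getD_eq_getElem?_getD, List.getElem?_cons_succ, List.getElem?_cons_zero] at hne h2
      simp only [xv, yv, Option.getD_some] at hne h2
      right
      constructor
      · simpa [Fin.ext_iff] using hne
      · simpa [Fin.ext_iff] using h2
    · have h1 := hall 1 (by omega)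
      simp only [List.getD, List.getD_eq_getElem?_getD, List.getElem?_cons_succ, List.getElem?_cons_zero] at hne h1
      simp only [xv, yv, Option.getD_some] at hne h1
      left
      constructor
      · simpa [Fin.ext_iff] using h1
      · simpa [Fin.ext_iff] using hne
    · simp [List.getD] at hne
    · simp [List.getD] at hne
  · rintro (⟨hf, hg⟩ | ⟨hf, hg⟩)
    · refine ⟨2, ?_, ?_⟩
      · simp only [support_geo, List.getD, List.getD_eq_getElem?_getD, List.getElem?_cons_succ, List.getElem?_cons_zero, Option.getD_some]
        simp [yv, Fin.ext_iff, hg]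
      · intro j hj
        simp only [support_geo]
        rcases j with _|_|_|_|j
        · rfl
        · simp only [List.getD, List.getD_eq_getElem?_getD, List.getElem?_cons_succ, List.getElem?_cons_zero, Option.getD_some]
          simp [xv, Fin.ext_iff, hf]
        · omega
        · rfl
        · rfl
    · refine ⟨1, ?_, ?_⟩
      · simp only [support_geo, List.getD, List.getD_eq_getElem?_getD, List.getElem?_cons_succ, List.getElem?_cons_zero, Option.getD_some]
        simp [xv, Fin.ext_iff, hf]
      · intro j hj
        simp only [support_geo]
        rcases j with _|_|_|_|j
        · rfl
        · omega
        · simp only [List.getD, List.getD_eq_getElem?_getD, List.getElem?_cons_succ, List.getElem?_cons_zero, Option.getD_some]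
          simp [yv, Fin.ext_iff, hg]
        · rfl
        · rfl

end SPGPath

theorem stmt1 (k : ℕ) (hk : 1 ≤ k) :
    ∃ (V : Type) (G : SimpleGraph V) (a b : V), a ≠ b ∧
      Nonempty (pathGraph (k + 1) ≃g SPG G a b) := by
  refine ⟨SPGPath.Vk k, SPGPath.Gk k, SPGPath.av k, SPGPath.bv k, ?_, ⟨?_⟩⟩
  · simp [SPGPath.av, SPGPath.bv]
  · refine ⟨Equiv.ofBijective _ (SPGPath.geo_bijective k), ?_⟩
    intro n m
    rw [Equiv.ofBijective_apply, Equiv.ofBijective_apply, SPGPath.adj_char, pathGraph_adj]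
    omega
end

section
/- For a graph G with distinct vertices a,b, S(G,a,b) is a complete graph if and only if every pair of a,b-geodesics in G differs at exactly one common index i (i.e., all pairs of geodesics differ at the same single position). -/
open SimpleGraph

theorem stmt3 {V : Type*} (G : SimpleGraph V) (a b : V) (hab : a ≠ b) :
    (∀ U W : Geodesic G a b, U ≠ W → (SPG G a b).Adj U W) ↔
      (∃ i : ℕ, ∀ U W : Geodesic G a b, U ≠ W → DiffAt U W i) := by
  constructor
  · intro h
    by_cases hex : ∃ U W : Geodesic G a b, U ≠ W
    · obtain ⟨U, W0, hUW0⟩ := hex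
      obtain ⟨i, hdi⟩ := h U W0 hUW0
      have key : ∀ X : Geodesic G a b, X ≠ U → DiffAt U X i := by
        intro X hXU
        obtain ⟨j, hdj⟩ := h U X hXU.symm
        by_cases hji : j = i
        · exact hji ▸ hdj
        · exfalso
          have h1 : X.1.support.getD i a = U.1.support.getD i a :=
            (hdj.2 i (fun hi => hji hi.symm)).symm
          have h2 : W0.1.support.getD j a = U.1.support.getD j a := (hdi.2 j hji).symm
          have hWX : W0 ≠ X := by
            intro he
            exact hdi.1 (by rw [he, h1])
          obtain ⟨k, hk⟩ := h W0 X hWX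
          by_cases hki : k = i
          · have hjk : j ≠ k := fun hh => hji (hh.trans hki)
            have := hk.2 j hjk
            exact hdj.1 (h2 ▸ this ▸ rfl)
          · have hik : i ≠ k := fun hh => hki hh.symm
            have := hk.2 i hik
            exact hdi.1 (by rw [this, h1])
      refine ⟨i, ?_⟩
      intro W X hWX
      by_cases hWU : W = U
      · subst hWU
        exact key X (fun hh => hWX hh.symm)
      · by_cases hXU : X = U
        · subst hXU
          obtain ⟨hd1, hd2⟩ := key W hWU
          exact ⟨hd1.symm, fun j hj => (hd2 j hj).symm⟩
        · have hW := key W hWU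
          have hX := key X hXU
          refine ⟨?_, fun j hj => (hW.2 j hj).symm.trans (hX.2 j hj)⟩
          obtain ⟨k, hk⟩ := h W X hWX
          by_cases hki : k = i
          · exact hki ▸ hk.1
          · exact absurd ((hW.2 k hki).symm.trans (hX.2 k hki)) hk.1
    · push_neg at hex
      exact ⟨0, fun U W hUW => absurd (hex U W) hUW⟩
  · rintro ⟨i, hi⟩ U W hUW
    exact ⟨i, hi U W hUW⟩
end

section
/- If H_1 and H_2 are both shortest path graphs, then their disjoint union H_1 ∪ H_2 is a shortest path graph. -/
open SimpleGraph

lemma walk_eq_of_support_eq {V : Type*} {G : SimpleGraph V} {u v : V}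
    (p : G.Walk u v) : ∀ (q : G.Walk u v), p.support = q.support → p = q := by
  induction p with
  | nil =>
    intro q h
    cases q with
    | nil => rfl
    | cons h' q' =>
      rw [Walk.support_nil, Walk.support_cons] at h
      have := congrArg List.length h
      simp [Walk.support_ne_nil] at this
  | cons h' p' ih =>
    intro q h
    cases q with
    | nil =>
      rw [Walk.support_nil, Walk.support_cons] at h
      have := congrArg List.length h
      simp at this
    | cons h'' q' =>
      rw [Walk.support_cons, Walk.support_cons] at h
      have h2 := List.tail_eq_of_cons_eq h
      have h3 := h2
      rw [Walk.support_eq_cons p', Walk.support_eq_cons q'] at h3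
      obtain ⟨hx, -⟩ := List.cons_eq_cons.mp h3
      subst hx
      rw [ih q' h2]

namespace SPGU

inductive NV (V₁ V₂ : Type) : Type
  | A : NV V₁ V₂ | B : NV V₁ V₂ | L : V₁ → ℕ → NV V₁ V₂ | R : V₂ → ℕ → NV V₁ V₂
open NV
variable {V₁ V₂ : Type}

def lvl (n : ℕ) : NV V₁ V₂ → ℕ
  | .A => 0 | .B => n | .L _ i => i | .R _ i => i

def Adj0 (G₁ : SimpleGraph V₁) (G₂ : SimpleGraph V₂) (a₁ b₁ : V₁) (a₂ b₂ : V₂)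
    (d₁ d₂ n : ℕ) : NV V₁ V₂ → NV V₁ V₂ → Prop
  | .A, .L v i => v = a₁ ∧ i = 1
  | .A, .R v i => v = a₂ ∧ i = 1
  | .L v i, .L w j => j = i + 1 ∧ ((1 ≤ i ∧ i ≤ d₁ ∧ G₁.Adj v w) ∨ (d₁ + 1 ≤ i ∧ v = b₁ ∧ w = b₁))
  | .R v i, .R w j => j = i + 1 ∧ ((1 ≤ i ∧ i ≤ d₂ ∧ G₂.Adj v w) ∨ (d₂ + 1 ≤ i ∧ v = b₂ ∧ w = b₂))
  | .L v i, .B => v = b₁ ∧ i + 1 = n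
  | .R v i, .B => v = b₂ ∧ i + 1 = n
  | _, _ => False

def Gnew (G₁ : SimpleGraph V₁) (G₂ : SimpleGraph V₂) (a₁ b₁ : V₁) (a₂ b₂ : V₂)
    (d₁ d₂ n : ℕ) : SimpleGraph (NV V₁ V₂) :=
  SimpleGraph.fromRel (Adj0 G₁ G₂ a₁ b₁ a₂ b₂ d₁ d₂ n)

variable {G₁ : SimpleGraph V₁} {G₂ : SimpleGraph V₂} {a₁ b₁ : V₁} {a₂ b₂ : V₂} {d₁ d₂ n : ℕ}
local notation "GN" => Gnew G₁ G₂ a₁ b₁ a₂ b₂ d₁ d₂ n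

lemma ne_LB {v : V₁} {i : ℕ} : (L v i : NV V₁ V₂) ≠ B := by intro h; exact nomatch h
lemma ne_LL' {v w : V₁} {i : ℕ} : (L v i : NV V₁ V₂) ≠ L w (i+1) := by
  intro h; cases h

lemma adj_LB {v : V₁} {i : ℕ} (h1 : v = b₁) (h2 : i + 1 = n) : (GN).Adj (L v i) B :=
  ⟨ne_LB, Or.inl (show v = b₁ ∧ i + 1 = n from ⟨h1, h2⟩)⟩

lemma adj_pad {i : ℕ} (h : d₁ + 1 ≤ i) : (GN).Adj (L b₁ i) (L b₁ (i+1)) :=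
  ⟨ne_LL', Or.inl (show i + 1 = i + 1 ∧ _ from ⟨rfl, Or.inr ⟨h, rfl, rfl⟩⟩)⟩

lemma adj_step {v w : V₁} {i : ℕ} (h1 : 1 ≤ i) (h2 : i ≤ d₁) (h3 : G₁.Adj v w) :
    (GN).Adj (L v i) (L w (i+1)) := by
  refine ⟨?_, Or.inl (show i + 1 = i + 1 ∧ _ from ⟨rfl, Or.inl ⟨h1, h2, h3⟩⟩)⟩
  intro h; cases h

lemma adj_AL : (GN).Adj A (L a₁ 1) :=
  ⟨by intro h; exact (nomatch h), Or.inl (show a₁ = a₁ ∧ (1:ℕ) = 1 from ⟨rfl, rfl⟩)⟩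

lemma padBuild : ∀ (k i : ℕ), 1 ≤ k → i + k = n → d₁ + 1 ≤ i →
    ∃ W : (GN).Walk (L b₁ i) B, W.length = k ∧
      ∀ j ≤ k, W.support.getD j B = if i + j = n then (B : NV V₁ V₂) else L b₁ (i + j) := by
  intro k
  induction k with
  | zero => omega
  | succ k ih =>
    intro i hk hin hd
    rcases Nat.eq_zero_or_pos k with rfl | hk1
    · have e : (GN).Adj (L b₁ i) B := adj_LB rfl (by omega)
      refine ⟨Walk.cons e Walk.nil, by simp, ?_⟩
      intro j hj
      interval_cases j
      · rw [Walk.support_cons, List.getD_cons_zero, if_neg (by omega), Nat.add_zero]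
      · rw [Walk.support_cons, List.getD_cons_succ, Walk.support_nil,
          List.getD_cons_zero, if_pos (by omega)]
    · obtain ⟨W', hlen, hpos⟩ := ih (i + 1) hk1 (by omega) (by omega)
      refine ⟨Walk.cons (adj_pad hd) W', by simp [hlen], ?_⟩
      intro j hj
      cases j with
      | zero =>
        rw [Walk.support_cons, List.getD_cons_zero, if_neg (by omega), Nat.add_zero]
      | succ j =>
        rw [Walk.support_cons, List.getD_cons_succ, hpos j (by omega)]
        have h2 : i + 1 + j = i + (j + 1) := by omega
        rw [h2]

lemma buildL : ∀ (v : V₁) (q : G₁.Walk v b₁) (i : ℕ), 1 ≤ i → i + q.length = d₁ + 1 →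
    d₁ + 2 ≤ n →
    ∃ W : (GN).Walk (L v i) B, W.length + i = n ∧
      ∀ j ≤ W.length, W.support.getD j B =
        if i + j = n then (B : NV V₁ V₂) else L (q.support.getD j b₁) (i + j) := by
  intro v q
  induction q with
  | nil =>
    intro i h1 h2 h3
    rw [Walk.length_nil, Nat.add_zero] at h2
    have e1 : 1 ≤ n - i := by omega
    have e2 : i + (n - i) = n := by omega
    have e3 : d₁ + 1 ≤ i := by omega
    obtain ⟨W, hlen, hpos⟩ := padBuild (n - i) i e1 e2 e3
    refine ⟨W, by omega, ?_⟩
    intro j hj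
    rw [hpos j (by omega)]
    simp [Walk.support_nil]
  | cons h q' ih =>
    intro i h1 h2 h3
    rw [Walk.length_cons] at h2
    obtain ⟨W', hlen, hpos⟩ := ih (i + 1) (by omega) (by omega) h3
    refine ⟨Walk.cons (adj_step h1 (by omega) h) W', by rw [Walk.length_cons]; omega, ?_⟩
    intro j hj
    rw [Walk.length_cons] at hj
    cases j with
    | zero =>
      rw [Walk.support_cons, List.getD_cons_zero, if_neg (by omega), Walk.support_cons,
        List.getD_cons_zero, Nat.add_zero]
    | succ j =>
      rw [Walk.support_cons, List.getD_cons_succ, hpos j (by omega), Walk.support_cons,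
        List.getD_cons_succ]
      have h4 : i + 1 + j = i + (j + 1) := by omega
      rw [h4]

lemma lvl_adj {x y : NV V₁ V₂} (h : (GN).Adj x y) :
    lvl n y = lvl n x + 1 ∨ lvl n x = lvl n y + 1 := by
  obtain ⟨-, h | h⟩ := h <;>
  · cases x <;> cases y <;> simp_all [Adj0, lvl]

lemma lvl_le_walk {x y : NV V₁ V₂} (W : (GN).Walk x y) :
    lvl n y ≤ lvl n x + W.length := by
  induction W with
  | nil => simp
  | cons h p ih =>
    rw [Walk.length_cons]
    rcases lvl_adj h with h' | h' <;> omega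

lemma adj_invA {y : NV V₁ V₂} (h : (GN).Adj A y) : y = L a₁ 1 ∨ y = R a₂ 1 := by
  obtain ⟨-, h | h⟩ := h <;> cases y <;> simp_all [Adj0]

lemma getD_singleton {γ : Type*} (c : γ) : ∀ m, ([c] : List γ).getD m c = c := by
  intro m; cases m <;> simp

lemma sideReachL : ∀ (x z : NV V₁ V₂) (W : (GN).Walk x z), z = B → (A : NV V₁ V₂) ∉ W.support →
    ∀ v i, x = L v i → G₁.Reachable v b₁ := by
  intro x z W
  induction W with
  | nil => intro hz _ v i hx; rw [hz] at hx; exact absurd hx (by intro h; exact nomatch h)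
  | @cons x y _ e W' ih =>
    intro hz hA v i hx
    subst hz
    subst hx
    rw [Walk.support_cons, List.mem_cons] at hA
    push_neg at hA
    obtain ⟨-, hA⟩ := hA
    cases y with
    | A => exact absurd (Walk.start_mem_support W') hA
    | B =>
      obtain ⟨-, he | he⟩ := e
      · obtain ⟨rfl, -⟩ : v = b₁ ∧ i + 1 = n := he
        exact Reachable.refl _
      · exact absurd he (by simp [Adj0])
    | L w j =>
      have hvw : G₁.Reachable v w := by
        obtain ⟨-, he | he⟩ := e
        · obtain ⟨-, ⟨-, -, h'⟩ | ⟨-, rfl, rfl⟩⟩ :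
            j = i + 1 ∧ ((1 ≤ i ∧ i ≤ d₁ ∧ G₁.Adj v w) ∨ (d₁ + 1 ≤ i ∧ v = b₁ ∧ w = b₁)) := he
          · exact h'.reachable
          · exact Reachable.refl _
        · obtain ⟨-, ⟨-, -, h'⟩ | ⟨-, rfl, rfl⟩⟩ :
            i = j + 1 ∧ ((1 ≤ j ∧ j ≤ d₁ ∧ G₁.Adj w v) ∨ (d₁ + 1 ≤ j ∧ w = b₁ ∧ v = b₁)) := he
          · exact h'.symm.reachable
          · exact Reachable.refl _
      exact hvw.trans (ih rfl hA w j rfl)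
    | R w j =>
      obtain ⟨-, he | he⟩ := e <;> exact absurd he (by simp [Adj0])

lemma extractL (hd : d₁ + 2 ≤ n) :
    ∀ (x z : NV V₁ V₂) (W : (GN).Walk x z) (v : V₁) (i : ℕ), z = B → x = L v i → 1 ≤ i →
      i + W.length = n →
      ∃ q : G₁.Walk v b₁, (i + q.length = d₁ + 1 ∨ (q.length = 0 ∧ d₁ + 1 ≤ i)) ∧
        ∀ j ≤ W.length, W.support.getD j B =
          if i + j = n then (B : NV V₁ V₂) else L (q.support.getD j b₁) (i + j) := by
  intro x z W
  induction W with
  | nil => intro v i hz hx; rw [hz] at hx; exact absurd hx (by intro h; exact nomatch h)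
  | @cons x y _ e W' ih =>
    intro v i hz hx h1 hbud
    subst hz
    subst hx
    rw [Walk.length_cons] at hbud
    have hlow := lvl_le_walk (G₁ := G₁) (G₂ := G₂) (a₁ := a₁) (b₁ := b₁) (a₂ := a₂)
      (b₂ := b₂) (d₁ := d₁) (d₂ := d₂) (n := n) W'
    cases y with
    | A => simp [lvl] at hlow; omega
    | B =>
      obtain ⟨-, he | he⟩ := e
      swap
      · exact absurd he (by simp [Adj0])
      obtain ⟨rfl, hin⟩ : v = b₁ ∧ i + 1 = n := he
      have hW0 : W'.length = 0 := by omega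
      have hWs : W'.support = [B] := Walk.nil_iff_support_eq.mp (Walk.nil_iff_length_eq.mpr hW0)
      refine ⟨Walk.nil, Or.inr ⟨rfl, by omega⟩, ?_⟩
      intro j hj
      change j ≤ W'.length + 1 at hj
      rw [hW0] at hj
      interval_cases j
      · show (L v i :: W'.support).getD 0 B = _
        rw [List.getD_cons_zero, if_neg (by omega), Walk.support_nil,
          Nat.add_zero, List.getD_cons_zero]
      · show (L v i :: W'.support).getD 1 B = _
        rw [List.getD_cons_succ, hWs, List.getD_cons_zero, if_pos (by omega)]
    | L w j' =>
      have hlvl : j' = i + 1 := by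
        simp only [lvl] at hlow
        rcases lvl_adj e with h' | h' <;> simp only [lvl] at h' <;> omega
      subst hlvl
      have hC : (1 ≤ i ∧ i ≤ d₁ ∧ G₁.Adj v w) ∨ (d₁ + 1 ≤ i ∧ v = b₁ ∧ w = b₁) := by
        obtain ⟨-, he | he⟩ := e
        · exact he.2
        · obtain ⟨h', -⟩ :
            i = (i + 1) + 1 ∧ ((1 ≤ i + 1 ∧ i + 1 ≤ d₁ ∧ G₁.Adj w v) ∨
              (d₁ + 1 ≤ i + 1 ∧ w = b₁ ∧ v = b₁)) := he
          omega
      obtain ⟨q', br', pos'⟩ := ih w (i + 1) rfl rfl (by omega) (by omega)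
      rcases hC with ⟨-, h2', hadj⟩ | ⟨hp, hv, hw⟩
      · refine ⟨Walk.cons hadj q', ?_, ?_⟩
        · rcases br' with hl | ⟨hq0, hge⟩
          · left; rw [Walk.length_cons]; omega
          · left; rw [Walk.length_cons]; omega
        · intro j hj
          cases j with
          | zero =>
            rw [Walk.support_cons, List.getD_cons_zero, if_neg (by omega), Walk.support_cons,
              Nat.add_zero, List.getD_cons_zero]
          | succ j =>
            rw [Walk.length_cons] at hj
            rw [Walk.support_cons, List.getD_cons_succ, pos' j (by omega), Walk.support_cons,
              List.getD_cons_succ]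
            have h4 : i + 1 + j = i + (j + 1) := by omega
            rw [h4]
      · have hbr : q'.length = 0 := by
          rcases br' with hl | ⟨hq0, -⟩
          · omega
          · exact hq0
        have hqs : q'.support = [w] := Walk.nil_iff_support_eq.mp (Walk.nil_iff_length_eq.mpr hbr)
        have hwv : w = v := hw.trans hv.symm
        refine ⟨q'.copy hwv rfl, Or.inr ⟨by rw [Walk.length_copy]; exact hbr, hp⟩, ?_⟩
        have hsc : (q'.copy hwv rfl).support = q'.support := Walk.support_copy q' hwv rfl
        intro j hj
        cases j with
        | zero =>
          rw [Walk.support_cons, List.getD_cons_zero, if_neg (by omega), Nat.add_zero, hsc, hqs,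
            List.getD_cons_zero, hwv]
        | succ j =>
          rw [Walk.length_cons] at hj
          rw [Walk.support_cons, List.getD_cons_succ, pos' j (by omega)]
          have h4 : i + 1 + j = i + (j + 1) := by omega
          rw [h4, hsc, hqs]
          by_cases hc : i + (j + 1) = n
          · rw [if_pos hc, if_pos hc]
          · rw [if_neg hc, if_neg hc, show ([w] : List V₁) = [b₁] by rw [hw],
              getD_singleton, getD_singleton]
    | R w j' =>
      obtain ⟨-, he | he⟩ := e <;> exact absurd he (by simp [Adj0])

def posFL (b₁ : V₁) (n : ℕ) (s : List V₁) (j : ℕ) : NV V₁ V₂ :=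
  if j = 0 then A else if j < n then L (s.getD (j - 1) b₁) j else if j = n then B else A

lemma consPosL (s : List V₁) {y : NV V₁ V₂} (e : (GN).Adj A y) (W₁ : (GN).Walk y B)
    (hbud : W₁.length + 1 = n)
    (hpos : ∀ j ≤ W₁.length, W₁.support.getD j B =
      if 1 + j = n then (B : NV V₁ V₂) else L (s.getD j b₁) (1 + j)) :
    ∀ j, (Walk.cons e W₁).support.getD j A = posFL b₁ n s j := by
  intro j
  cases j with
  | zero => rw [Walk.support_cons, List.getD_cons_zero, posFL, if_pos rfl]
  | succ j =>
    rw [Walk.support_cons, List.getD_cons_succ]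
    by_cases hj : j ≤ W₁.length
    · have hlt : j < W₁.support.length := by rw [Walk.length_support]; omega
      rw [List.getD_eq_getElem _ A hlt, ← List.getD_eq_getElem _ B hlt, hpos j hj]
      unfold posFL
      by_cases hc : 1 + j = n
      · rw [if_pos hc, if_neg (show ¬(j + 1 = 0) by omega),
          if_neg (show ¬(j + 1 < n) by omega), if_pos (show j + 1 = n by omega)]
      · rw [if_neg hc, if_neg (show ¬(j + 1 = 0) by omega),
          if_pos (show j + 1 < n by omega), Nat.succ_sub_one, Nat.add_comm 1 j]
    · rw [List.getD_eq_default _ A (by rw [Walk.length_support]; omega)]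
      unfold posFL
      rw [if_neg (show ¬(j + 1 = 0) by omega), if_neg (show ¬(j + 1 < n) by omega),
        if_neg (show ¬(j + 1 = n) by omega)]

lemma geoWalkL (hn : d₁ + 2 ≤ n) (q : G₁.Walk a₁ b₁) (hq : q.length = d₁) :
    ∃ W : (GN).Walk A B, W.length = n ∧
      ∀ j, W.support.getD j A = posFL b₁ n q.support j := by
  obtain ⟨W₁, hlen, hpos⟩ := buildL a₁ q 1 le_rfl (by omega) hn
  refine ⟨Walk.cons adj_AL W₁, by rw [Walk.length_cons]; omega, ?_⟩
  exact consPosL q.support adj_AL W₁ (by omega) hpos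

lemma distAB (h : ∃ W : (GN).Walk A B, W.length = n) : (GN).dist A B = n := by
  obtain ⟨W, hW⟩ := h
  have h1 := SimpleGraph.dist_le W
  have h2 : (GN).Reachable A B := ⟨W⟩
  obtain ⟨P, hP⟩ := h2.exists_walk_length_eq_dist
  have h3 := lvl_le_walk P
  simp only [lvl] at h3
  omega

lemma lvl_posFL (s : List V₁) (j : ℕ) (hj : j ≤ n) :
    lvl n (posFL (V₂ := V₂) b₁ n s j) = j := by
  unfold posFL
  by_cases h0 : j = 0
  · rw [if_pos h0, h0]; rfl
  · rw [if_neg h0]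
    by_cases h1 : j < n
    · rw [if_pos h1]; rfl
    · rw [if_neg h1, if_pos (by omega)]
      simp only [lvl]; omega

lemma isPath_of_posL (W : (GN).Walk A B) (hlen : W.length = n) (s : List V₁)
    (hpos : ∀ j, W.support.getD j A = posFL b₁ n s j) : W.IsPath := by
  rw [Walk.isPath_def]
  apply List.Nodup.of_map (lvl n)
  have hmap : W.support.map (lvl n) = List.range (n + 1) := by
    apply List.ext_getElem
    · rw [List.length_map, Walk.length_support, List.length_range, hlen]
    · intro j h1 h2
      rw [List.getElem_map, List.getElem_range]
      have hjl : j < W.support.length := by rwa [List.length_map] at h1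
      rw [← List.getD_eq_getElem _ A hjl, hpos j]
      apply lvl_posFL
      rw [Walk.length_support, hlen] at hjl
      omega
  rw [hmap]
  exact List.nodup_range

lemma forwardL (hdd : G₁.dist a₁ b₁ = d₁) (hn : d₁ + 2 ≤ n) (p : Geodesic G₁ a₁ b₁) :
    ∃ P : Geodesic (GN) A B, ∀ j, P.1.support.getD j A = posFL b₁ n p.1.support j := by
  obtain ⟨W, hlen, hpos⟩ := geoWalkL hn p.1 (p.2.2.trans hdd)
  exact ⟨⟨W, isPath_of_posL W hlen _ hpos, by rw [hlen, distAB ⟨W, hlen⟩]⟩, hpos⟩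

lemma ne_RB {v : V₂} {i : ℕ} : (R v i : NV V₁ V₂) ≠ B := by intro h; exact nomatch h
lemma ne_RR' {v w : V₂} {i : ℕ} : (R v i : NV V₁ V₂) ≠ R w (i+1) := by
  intro h; cases h

lemma adj_RB {v : V₂} {i : ℕ} (h1 : v = b₂) (h2 : i + 1 = n) : (GN).Adj (R v i) B :=
  ⟨ne_RB, Or.inl (show v = b₂ ∧ i + 1 = n from ⟨h1, h2⟩)⟩

lemma adj_padR {i : ℕ} (h : d₂ + 1 ≤ i) : (GN).Adj (R b₂ i) (R b₂ (i+1)) :=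
  ⟨ne_RR', Or.inl (show i + 1 = i + 1 ∧ _ from ⟨rfl, Or.inr ⟨h, rfl, rfl⟩⟩)⟩

lemma adj_stepR {v w : V₂} {i : ℕ} (h1 : 1 ≤ i) (h2 : i ≤ d₂) (h3 : G₂.Adj v w) :
    (GN).Adj (R v i) (R w (i+1)) := by
  refine ⟨?_, Or.inl (show i + 1 = i + 1 ∧ _ from ⟨rfl, Or.inl ⟨h1, h2, h3⟩⟩)⟩
  intro h; cases h

lemma adj_AR : (GN).Adj A (R a₂ 1) :=
  ⟨by intro h; exact (nomatch h), Or.inl (show a₂ = a₂ ∧ (1:ℕ) = 1 from ⟨rfl, rfl⟩)⟩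

lemma padBuildR : ∀ (k i : ℕ), 1 ≤ k → i + k = n → d₂ + 1 ≤ i →
    ∃ W : (GN).Walk (R b₂ i) B, W.length = k ∧
      ∀ j ≤ k, W.support.getD j B = if i + j = n then (B : NV V₁ V₂) else R b₂ (i + j) := by
  intro k
  induction k with
  | zero => omega
  | succ k ih =>
    intro i hk hin hd
    rcases Nat.eq_zero_or_pos k with rfl | hk1
    · have e : (GN).Adj (R b₂ i) B := adj_RB rfl (by omega)
      refine ⟨Walk.cons e Walk.nil, by simp, ?_⟩
      intro j hj
      interval_cases j
      · rw [Walk.support_cons, List.getD_cons_zero, if_neg (by omega), Nat.add_zero]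
      · rw [Walk.support_cons, List.getD_cons_succ, Walk.support_nil,
          List.getD_cons_zero, if_pos (by omega)]
    · obtain ⟨W', hlen, hpos⟩ := ih (i + 1) hk1 (by omega) (by omega)
      refine ⟨Walk.cons (adj_padR hd) W', by simp [hlen], ?_⟩
      intro j hj
      cases j with
      | zero =>
        rw [Walk.support_cons, List.getD_cons_zero, if_neg (by omega), Nat.add_zero]
      | succ j =>
        rw [Walk.support_cons, List.getD_cons_succ, hpos j (by omega)]
        have h2 : i + 1 + j = i + (j + 1) := by omega
        rw [h2]

lemma buildR : ∀ (v : V₂) (q : G₂.Walk v b₂) (i : ℕ), 1 ≤ i → i + q.length = d₂ + 1 →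
    d₂ + 2 ≤ n →
    ∃ W : (GN).Walk (R v i) B, W.length + i = n ∧
      ∀ j ≤ W.length, W.support.getD j B =
        if i + j = n then (B : NV V₁ V₂) else R (q.support.getD j b₂) (i + j) := by
  intro v q
  induction q with
  | nil =>
    intro i h1 h2 h3
    rw [Walk.length_nil, Nat.add_zero] at h2
    have e1 : 1 ≤ n - i := by omega
    have e2 : i + (n - i) = n := by omega
    have e3 : d₂ + 1 ≤ i := by omega
    obtain ⟨W, hlen, hpos⟩ := padBuildR (n - i) i e1 e2 e3
    refine ⟨W, by omega, ?_⟩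
    intro j hj
    rw [hpos j (by omega)]
    simp [Walk.support_nil]
  | cons h q' ih =>
    intro i h1 h2 h3
    rw [Walk.length_cons] at h2
    obtain ⟨W', hlen, hpos⟩ := ih (i + 1) (by omega) (by omega) h3
    refine ⟨Walk.cons (adj_stepR h1 (by omega) h) W', by rw [Walk.length_cons]; omega, ?_⟩
    intro j hj
    rw [Walk.length_cons] at hj
    cases j with
    | zero =>
      rw [Walk.support_cons, List.getD_cons_zero, if_neg (by omega), Walk.support_cons,
        List.getD_cons_zero, Nat.add_zero]
    | succ j =>
      rw [Walk.support_cons, List.getD_cons_succ, hpos j (by omega), Walk.support_cons,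
        List.getD_cons_succ]
      have h4 : i + 1 + j = i + (j + 1) := by omega
      rw [h4]

lemma sideReachR : ∀ (x z : NV V₁ V₂) (W : (GN).Walk x z), z = B → (A : NV V₁ V₂) ∉ W.support →
    ∀ v i, x = R v i → G₂.Reachable v b₂ := by
  intro x z W
  induction W with
  | nil => intro hz _ v i hx; rw [hz] at hx; exact absurd hx (by intro h; exact nomatch h)
  | @cons x y _ e W' ih =>
    intro hz hA v i hx
    subst hz
    subst hx
    rw [Walk.support_cons, List.mem_cons] at hA
    push_neg at hA
    obtain ⟨-, hA⟩ := hA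
    cases y with
    | A => exact absurd (Walk.start_mem_support W') hA
    | B =>
      obtain ⟨-, he | he⟩ := e
      · obtain ⟨rfl, -⟩ : v = b₂ ∧ i + 1 = n := he
        exact Reachable.refl _
      · exact absurd he (by simp [Adj0])
    | R w j =>
      have hvw : G₂.Reachable v w := by
        obtain ⟨-, he | he⟩ := e
        · obtain ⟨-, ⟨-, -, h'⟩ | ⟨-, rfl, rfl⟩⟩ :
            j = i + 1 ∧ ((1 ≤ i ∧ i ≤ d₂ ∧ G₂.Adj v w) ∨ (d₂ + 1 ≤ i ∧ v = b₂ ∧ w = b₂)) := he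
          · exact h'.reachable
          · exact Reachable.refl _
        · obtain ⟨-, ⟨-, -, h'⟩ | ⟨-, rfl, rfl⟩⟩ :
            i = j + 1 ∧ ((1 ≤ j ∧ j ≤ d₂ ∧ G₂.Adj w v) ∨ (d₂ + 1 ≤ j ∧ w = b₂ ∧ v = b₂)) := he
          · exact h'.symm.reachable
          · exact Reachable.refl _
      exact hvw.trans (ih rfl hA w j rfl)
    | L w j =>
      obtain ⟨-, he | he⟩ := e <;> exact absurd he (by simp [Adj0])

lemma extractR (hd : d₂ + 2 ≤ n) :
    ∀ (x z : NV V₁ V₂) (W : (GN).Walk x z) (v : V₂) (i : ℕ), z = B → x = R v i → 1 ≤ i →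
      i + W.length = n →
      ∃ q : G₂.Walk v b₂, (i + q.length = d₂ + 1 ∨ (q.length = 0 ∧ d₂ + 1 ≤ i)) ∧
        ∀ j ≤ W.length, W.support.getD j B =
          if i + j = n then (B : NV V₁ V₂) else R (q.support.getD j b₂) (i + j) := by
  intro x z W
  induction W with
  | nil => intro v i hz hx; rw [hz] at hx; exact absurd hx (by intro h; exact nomatch h)
  | @cons x y _ e W' ih =>
    intro v i hz hx h1 hbud
    subst hz
    subst hx
    rw [Walk.length_cons] at hbud
    have hlow := lvl_le_walk (G₂ := G₂) (G₁ := G₁) (a₂ := a₂) (b₂ := b₂) (a₁ := a₁)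
      (b₁ := b₁) (d₂ := d₂) (d₁ := d₁) (n := n) W'
    cases y with
    | A => simp [lvl] at hlow; omega
    | B =>
      obtain ⟨-, he | he⟩ := e
      swap
      · exact absurd he (by simp [Adj0])
      obtain ⟨rfl, hin⟩ : v = b₂ ∧ i + 1 = n := he
      have hW0 : W'.length = 0 := by omega
      have hWs : W'.support = [B] := Walk.nil_iff_support_eq.mp (Walk.nil_iff_length_eq.mpr hW0)
      refine ⟨Walk.nil, Or.inr ⟨rfl, by omega⟩, ?_⟩
      intro j hj
      change j ≤ W'.length + 1 at hj
      rw [hW0] at hj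
      interval_cases j
      · show (R v i :: W'.support).getD 0 B = _
        rw [List.getD_cons_zero, if_neg (by omega), Walk.support_nil,
          Nat.add_zero, List.getD_cons_zero]
      · show (R v i :: W'.support).getD 1 B = _
        rw [List.getD_cons_succ, hWs, List.getD_cons_zero, if_pos (by omega)]
    | R w j' =>
      have hlvl : j' = i + 1 := by
        simp only [lvl] at hlow
        rcases lvl_adj e with h' | h' <;> simp only [lvl] at h' <;> omega
      subst hlvl
      have hC : (1 ≤ i ∧ i ≤ d₂ ∧ G₂.Adj v w) ∨ (d₂ + 1 ≤ i ∧ v = b₂ ∧ w = b₂) := by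
        obtain ⟨-, he | he⟩ := e
        · exact he.2
        · obtain ⟨h', -⟩ :
            i = (i + 1) + 1 ∧ ((1 ≤ i + 1 ∧ i + 1 ≤ d₂ ∧ G₂.Adj w v) ∨
              (d₂ + 1 ≤ i + 1 ∧ w = b₂ ∧ v = b₂)) := he
          omega
      obtain ⟨q', br', pos'⟩ := ih w (i + 1) rfl rfl (by omega) (by omega)
      rcases hC with ⟨-, h2', hadj⟩ | ⟨hp, hv, hw⟩
      · refine ⟨Walk.cons hadj q', ?_, ?_⟩
        · rcases br' with hl | ⟨hq0, hge⟩
          · left; rw [Walk.length_cons]; omega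
          · left; rw [Walk.length_cons]; omega
        · intro j hj
          cases j with
          | zero =>
            rw [Walk.support_cons, List.getD_cons_zero, if_neg (by omega), Walk.support_cons,
              Nat.add_zero, List.getD_cons_zero]
          | succ j =>
            rw [Walk.length_cons] at hj
            rw [Walk.support_cons, List.getD_cons_succ, pos' j (by omega), Walk.support_cons,
              List.getD_cons_succ]
            have h4 : i + 1 + j = i + (j + 1) := by omega
            rw [h4]
      · have hbr : q'.length = 0 := by
          rcases br' with hl | ⟨hq0, -⟩
          · omega
          · exact hq0
        have hqs : q'.support = [w] := Walk.nil_iff_support_eq.mp (Walk.nil_iff_length_eq.mpr hbr)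
        have hwv : w = v := hw.trans hv.symm
        refine ⟨q'.copy hwv rfl, Or.inr ⟨by rw [Walk.length_copy]; exact hbr, hp⟩, ?_⟩
        have hsc : (q'.copy hwv rfl).support = q'.support := Walk.support_copy q' hwv rfl
        intro j hj
        cases j with
        | zero =>
          rw [Walk.support_cons, List.getD_cons_zero, if_neg (by omega), Nat.add_zero, hsc, hqs,
            List.getD_cons_zero, hwv]
        | succ j =>
          rw [Walk.length_cons] at hj
          rw [Walk.support_cons, List.getD_cons_succ, pos' j (by omega)]
          have h4 : i + 1 + j = i + (j + 1) := by omega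
          rw [h4, hsc, hqs]
          by_cases hc : i + (j + 1) = n
          · rw [if_pos hc, if_pos hc]
          · rw [if_neg hc, if_neg hc, show ([w] : List V₂) = [b₂] by rw [hw],
              getD_singleton, getD_singleton]
    | L w j' =>
      obtain ⟨-, he | he⟩ := e <;> exact absurd he (by simp [Adj0])

def posFR (b₂ : V₂) (n : ℕ) (s : List V₂) (j : ℕ) : NV V₁ V₂ :=
  if j = 0 then A else if j < n then R (s.getD (j - 1) b₂) j else if j = n then B else A

lemma consPosR (s : List V₂) {y : NV V₁ V₂} (e : (GN).Adj A y) (W₁ : (GN).Walk y B)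
    (hbud : W₁.length + 1 = n)
    (hpos : ∀ j ≤ W₁.length, W₁.support.getD j B =
      if 1 + j = n then (B : NV V₁ V₂) else R (s.getD j b₂) (1 + j)) :
    ∀ j, (Walk.cons e W₁).support.getD j A = posFR b₂ n s j := by
  intro j
  cases j with
  | zero => rw [Walk.support_cons, List.getD_cons_zero, posFR, if_pos rfl]
  | succ j =>
    rw [Walk.support_cons, List.getD_cons_succ]
    by_cases hj : j ≤ W₁.length
    · have hlt : j < W₁.support.length := by rw [Walk.length_support]; omega
      rw [List.getD_eq_getElem _ A hlt, ← List.getD_eq_getElem _ B hlt, hpos j hj]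
      unfold posFR
      by_cases hc : 1 + j = n
      · rw [if_pos hc, if_neg (show ¬(j + 1 = 0) by omega),
          if_neg (show ¬(j + 1 < n) by omega), if_pos (show j + 1 = n by omega)]
      · rw [if_neg hc, if_neg (show ¬(j + 1 = 0) by omega),
          if_pos (show j + 1 < n by omega), Nat.succ_sub_one, Nat.add_comm 1 j]
    · rw [List.getD_eq_default _ A (by rw [Walk.length_support]; omega)]
      unfold posFR
      rw [if_neg (show ¬(j + 1 = 0) by omega), if_neg (show ¬(j + 1 < n) by omega),
        if_neg (show ¬(j + 1 = n) by omega)]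

lemma geoWalkR (hn : d₂ + 2 ≤ n) (q : G₂.Walk a₂ b₂) (hq : q.length = d₂) :
    ∃ W : (GN).Walk A B, W.length = n ∧
      ∀ j, W.support.getD j A = posFR b₂ n q.support j := by
  obtain ⟨W₁, hlen, hpos⟩ := buildR a₂ q 1 le_rfl (by omega) hn
  refine ⟨Walk.cons adj_AR W₁, by rw [Walk.length_cons]; omega, ?_⟩
  exact consPosR q.support adj_AR W₁ (by omega) hpos

lemma lvl_posFR (s : List V₂) (j : ℕ) (hj : j ≤ n) :
    lvl n (posFR (V₁ := V₁) b₂ n s j) = j := by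
  unfold posFR
  by_cases h0 : j = 0
  · rw [if_pos h0, h0]; rfl
  · rw [if_neg h0]
    by_cases h1 : j < n
    · rw [if_pos h1]; rfl
    · rw [if_neg h1, if_pos (by omega)]
      simp only [lvl]; omega

lemma isPath_of_posR (W : (GN).Walk A B) (hlen : W.length = n) (s : List V₂)
    (hpos : ∀ j, W.support.getD j A = posFR b₂ n s j) : W.IsPath := by
  rw [Walk.isPath_def]
  apply List.Nodup.of_map (lvl n)
  have hmap : W.support.map (lvl n) = List.range (n + 1) := by
    apply List.ext_getElem
    · rw [List.length_map, Walk.length_support, List.length_range, hlen]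
    · intro j h1 h2
      rw [List.getElem_map, List.getElem_range]
      have hjl : j < W.support.length := by rwa [List.length_map] at h1
      rw [← List.getD_eq_getElem _ A hjl, hpos j]
      apply lvl_posFR
      rw [Walk.length_support, hlen] at hjl
      omega
  rw [hmap]
  exact List.nodup_range

lemma forwardR (hdd : G₂.dist a₂ b₂ = d₂) (hn : d₂ + 2 ≤ n) (p : Geodesic G₂ a₂ b₂) :
    ∃ P : Geodesic (GN) A B, ∀ j, P.1.support.getD j A = posFR b₂ n p.1.support j := by
  obtain ⟨W, hlen, hpos⟩ := geoWalkR hn p.1 (p.2.2.trans hdd)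
  exact ⟨⟨W, isPath_of_posR W hlen _ hpos, by rw [hlen, distAB ⟨W, hlen⟩]⟩, hpos⟩

lemma backwardL {y : NV V₁ V₂} (hab₁ : a₁ ≠ b₁)
    (hdd₁ : G₁.dist a₁ b₁ = d₁) (hn₁ : d₁ + 2 ≤ n)
    (e : (GN).Adj A y) (W₁ : (GN).Walk y B) (hy : y = L a₁ 1)
    (hpath : (Walk.cons e W₁).IsPath) (hlen : (Walk.cons e W₁).length = (GN).dist A B) :
    ∃ p : Geodesic G₁ a₁ b₁,
      ∀ j, (Walk.cons e W₁).support.getD j A = posFL b₁ n p.1.support j := by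
  subst hy
  obtain ⟨hW₁path, hA⟩ := (Walk.cons_isPath_iff e W₁).mp hpath
  have hreach : G₁.Reachable a₁ b₁ := sideReachL _ _ W₁ rfl hA a₁ 1 rfl
  obtain ⟨q₀, -, hq₀len⟩ := hreach.exists_path_of_dist
  have hdistn : (GN).dist A B = n := by
    apply distAB
    obtain ⟨W', hW', -⟩ := geoWalkL hn₁ q₀ (hq₀len.trans hdd₁)
    exact ⟨W', hW'⟩
  rw [hdistn] at hlen
  rw [Walk.length_cons] at hlen
  obtain ⟨q, br, pos⟩ := extractL hn₁ _ _ W₁ a₁ 1 rfl rfl le_rfl (by omega)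
  have hqlen : q.length = d₁ := by
    rcases br with h | ⟨h0, hge⟩
    · omega
    · exact absurd (Walk.eq_of_length_eq_zero h0) hab₁
  refine ⟨⟨q, q.isPath_of_length_eq_dist (by rw [hqlen, hdd₁]), by rw [hqlen, hdd₁]⟩, ?_⟩
  exact consPosL q.support e W₁ (by omega) pos

lemma backwardR {y : NV V₁ V₂} (hab₂ : a₂ ≠ b₂)
    (hdd₂ : G₂.dist a₂ b₂ = d₂) (hn₂ : d₂ + 2 ≤ n)
    (e : (GN).Adj A y) (W₁ : (GN).Walk y B) (hy : y = R a₂ 1)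
    (hpath : (Walk.cons e W₁).IsPath) (hlen : (Walk.cons e W₁).length = (GN).dist A B) :
    ∃ p : Geodesic G₂ a₂ b₂,
      ∀ j, (Walk.cons e W₁).support.getD j A = posFR b₂ n p.1.support j := by
  subst hy
  obtain ⟨hW₁path, hA⟩ := (Walk.cons_isPath_iff e W₁).mp hpath
  have hreach : G₂.Reachable a₂ b₂ := sideReachR _ _ W₁ rfl hA a₂ 1 rfl
  obtain ⟨q₀, -, hq₀len⟩ := hreach.exists_path_of_dist
  have hdistn : (GN).dist A B = n := by
    apply distAB
    obtain ⟨W', hW', -⟩ := geoWalkR hn₂ q₀ (hq₀len.trans hdd₂)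
    exact ⟨W', hW'⟩
  rw [hdistn] at hlen
  rw [Walk.length_cons] at hlen
  obtain ⟨q, br, pos⟩ := extractR hn₂ _ _ W₁ a₂ 1 rfl rfl le_rfl (by omega)
  have hqlen : q.length = d₂ := by
    rcases br with h | ⟨h0, hge⟩
    · omega
    · exact absurd (Walk.eq_of_length_eq_zero h0) hab₂
  refine ⟨⟨q, q.isPath_of_length_eq_dist (by rw [hqlen, hdd₂]), by rw [hqlen, hdd₂]⟩, ?_⟩
  exact consPosR q.support e W₁ (by omega) pos

lemma backward (hab₁ : a₁ ≠ b₁) (hab₂ : a₂ ≠ b₂)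
    (hdd₁ : G₁.dist a₁ b₁ = d₁) (hdd₂ : G₂.dist a₂ b₂ = d₂)
    (hn₁ : d₁ + 2 ≤ n) (hn₂ : d₂ + 2 ≤ n) (P : Geodesic (GN) A B) :
    (∃ p : Geodesic G₁ a₁ b₁, ∀ j, P.1.support.getD j A = posFL b₁ n p.1.support j) ∨
    (∃ p : Geodesic G₂ a₂ b₂, ∀ j, P.1.support.getD j A = posFR b₂ n p.1.support j) := by
  obtain ⟨W, hpath, hdist⟩ := P
  cases W with
  | @cons _ y _ e W₁ =>
    rcases adj_invA e with hy | hy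
    · exact Or.inl (backwardL hab₁ hdd₁ hn₁ e W₁ hy hpath hdist)
    · exact Or.inr (backwardR hab₂ hdd₂ hn₂ e W₁ hy hpath hdist)

lemma geo_ext (P Q : Geodesic (GN) A B)
    (h : ∀ j, P.1.support.getD j A = Q.1.support.getD j A) : P = Q := by
  apply Subtype.ext
  apply walk_eq_of_support_eq
  apply List.ext_getElem
  · rw [Walk.length_support, Walk.length_support, P.2.2, Q.2.2]
  · intro j h1 h2
    rw [← List.getD_eq_getElem _ A h1, ← List.getD_eq_getElem _ A h2, h j]

lemma posFL_inj (hdd₁ : G₁.dist a₁ b₁ = d₁) (hn₁ : d₁ + 2 ≤ n) (p p' : Geodesic G₁ a₁ b₁)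
    (h : ∀ j, posFL (V₂ := V₂) b₁ n p.1.support j = posFL b₁ n p'.1.support j) : p = p' := by
  have hl : p.1.support.length = d₁ + 1 := by rw [Walk.length_support, p.2.2, hdd₁]
  have hl' : p'.1.support.length = d₁ + 1 := by rw [Walk.length_support, p'.2.2, hdd₁]
  apply Subtype.ext
  apply walk_eq_of_support_eq
  apply List.ext_getElem
  · rw [hl, hl']
  · intro j h1 h2
    have hjd : j < d₁ + 1 := by omega
    have hx := h (j + 1)
    unfold posFL at hx
    rw [if_neg (show ¬(j + 1 = 0) by omega), if_neg (show ¬(j + 1 = 0) by omega),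
      if_pos (show j + 1 < n by omega), if_pos (show j + 1 < n by omega),
      Nat.succ_sub_one] at hx
    simp only [NV.L.injEq] at hx
    rw [← List.getD_eq_getElem _ b₁ h1, ← List.getD_eq_getElem _ b₁ h2]
    exact hx.1

lemma posFR_inj (hdd₂ : G₂.dist a₂ b₂ = d₂) (hn₂ : d₂ + 2 ≤ n) (p p' : Geodesic G₂ a₂ b₂)
    (h : ∀ j, posFR (V₁ := V₁) b₂ n p.1.support j = posFR b₂ n p'.1.support j) : p = p' := by
  have hl : p.1.support.length = d₂ + 1 := by rw [Walk.length_support, p.2.2, hdd₂]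
  have hl' : p'.1.support.length = d₂ + 1 := by rw [Walk.length_support, p'.2.2, hdd₂]
  apply Subtype.ext
  apply walk_eq_of_support_eq
  apply List.ext_getElem
  · rw [hl, hl']
  · intro j h1 h2
    have hjd : j < d₂ + 1 := by omega
    have hx := h (j + 1)
    unfold posFR at hx
    rw [if_neg (show ¬(j + 1 = 0) by omega), if_neg (show ¬(j + 1 = 0) by omega),
      if_pos (show j + 1 < n by omega), if_pos (show j + 1 < n by omega),
      Nat.succ_sub_one] at hx
    simp only [NV.R.injEq] at hx
    rw [← List.getD_eq_getElem _ b₂ h1, ← List.getD_eq_getElem _ b₂ h2]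
    exact hx.1

lemma posF_cross (hn : 2 ≤ n) (sL : List V₁) (sR : List V₂)
    (h : posFL (V₂ := V₂) b₁ n sL 1 = posFR b₂ n sR 1) : False := by
  unfold posFL posFR at h
  rw [if_neg one_ne_zero, if_neg one_ne_zero, if_pos (by omega), if_pos (by omega)] at h
  exact nomatch h

lemma posFL_eq_iff (hdd₁ : G₁.dist a₁ b₁ = d₁) (hn3 : d₁ + 3 ≤ n) (p p' : Geodesic G₁ a₁ b₁)
    (j : ℕ) :
    (posFL (V₂ := V₂) b₁ n p.1.support (j + 1) = posFL b₁ n p'.1.support (j + 1)) ↔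
      (p.1.support.getD j a₁ = p'.1.support.getD j a₁) := by
  have hl : p.1.support.length = d₁ + 1 := by rw [Walk.length_support, p.2.2, hdd₁]
  have hl' : p'.1.support.length = d₁ + 1 := by rw [Walk.length_support, p'.2.2, hdd₁]
  unfold posFL
  rw [if_neg (show ¬(j + 1 = 0) by omega), if_neg (show ¬(j + 1 = 0) by omega)]
  by_cases hc : j + 1 < n
  · rw [if_pos hc, if_pos hc, Nat.succ_sub_one]
    simp only [NV.L.injEq, and_true]
    by_cases hr : j < d₁ + 1
    · rw [List.getD_eq_getElem _ b₁ (by omega), List.getD_eq_getElem _ b₁ (by omega),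
        ← List.getD_eq_getElem _ a₁ (by omega), ← List.getD_eq_getElem _ a₁ (by omega)]
    · rw [List.getD_eq_default _ b₁ (by omega), List.getD_eq_default _ b₁ (by omega),
        List.getD_eq_default _ a₁ (by omega), List.getD_eq_default _ a₁ (by omega)]
      simp
  · rw [if_neg hc, if_neg hc]
    refine iff_of_true rfl ?_
    rw [List.getD_eq_default _ a₁ (by omega), List.getD_eq_default _ a₁ (by omega)]

lemma posFR_eq_iff (hdd₂ : G₂.dist a₂ b₂ = d₂) (hn3 : d₂ + 3 ≤ n) (p p' : Geodesic G₂ a₂ b₂)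
    (j : ℕ) :
    (posFR (V₁ := V₁) b₂ n p.1.support (j + 1) = posFR b₂ n p'.1.support (j + 1)) ↔
      (p.1.support.getD j a₂ = p'.1.support.getD j a₂) := by
  have hl : p.1.support.length = d₂ + 1 := by rw [Walk.length_support, p.2.2, hdd₂]
  have hl' : p'.1.support.length = d₂ + 1 := by rw [Walk.length_support, p'.2.2, hdd₂]
  unfold posFR
  rw [if_neg (show ¬(j + 1 = 0) by omega), if_neg (show ¬(j + 1 = 0) by omega)]
  by_cases hc : j + 1 < n
  · rw [if_pos hc, if_pos hc, Nat.succ_sub_one]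
    simp only [NV.R.injEq, and_true]
    by_cases hr : j < d₂ + 1
    · rw [List.getD_eq_getElem _ b₂ (by omega), List.getD_eq_getElem _ b₂ (by omega),
        ← List.getD_eq_getElem _ a₂ (by omega), ← List.getD_eq_getElem _ a₂ (by omega)]
    · rw [List.getD_eq_default _ b₂ (by omega), List.getD_eq_default _ b₂ (by omega),
        List.getD_eq_default _ a₂ (by omega), List.getD_eq_default _ a₂ (by omega)]
      simp
  · rw [if_neg hc, if_neg hc]
    refine iff_of_true rfl ?_
    rw [List.getD_eq_default _ a₂ (by omega), List.getD_eq_default _ a₂ (by omega)]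

lemma adjSPG_LL (hdd₁ : G₁.dist a₁ b₁ = d₁) (hn3 : d₁ + 3 ≤ n)
    (P P' : Geodesic (GN) A B) (p p' : Geodesic G₁ a₁ b₁)
    (hP : ∀ j, P.1.support.getD j A = posFL b₁ n p.1.support j)
    (hP' : ∀ j, P'.1.support.getD j A = posFL b₁ n p'.1.support j) :
    (SPG (GN) A B).Adj P P' ↔ (SPG G₁ a₁ b₁).Adj p p' := by
  constructor
  · rintro ⟨i, hne, hall⟩
    cases i with
    | zero =>
      exfalso
      apply hne
      rw [hP 0, hP' 0]
      unfold posFL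
      rw [if_pos rfl, if_pos rfl]
    | succ i =>
      refine ⟨i, ?_, ?_⟩
      · intro hq
        apply hne
        rw [hP, hP']
        exact (posFL_eq_iff hdd₁ hn3 p p' i).mpr hq
      · intro j hj
        have hx := hall (j + 1) (by omega)
        rw [hP, hP'] at hx
        exact (posFL_eq_iff hdd₁ hn3 p p' j).mp hx
  · rintro ⟨i, hne, hall⟩
    refine ⟨i + 1, ?_, ?_⟩
    · rw [hP, hP']
      intro hx
      exact hne ((posFL_eq_iff hdd₁ hn3 p p' i).mp hx)
    · intro j hj
      rw [hP j, hP' j]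
      cases j with
      | zero =>
        unfold posFL
        rw [if_pos rfl, if_pos rfl]
      | succ k =>
        exact (posFL_eq_iff hdd₁ hn3 p p' k).mpr (hall k (by omega))

lemma adjSPG_RR (hdd₂ : G₂.dist a₂ b₂ = d₂) (hn3 : d₂ + 3 ≤ n)
    (P P' : Geodesic (GN) A B) (p p' : Geodesic G₂ a₂ b₂)
    (hP : ∀ j, P.1.support.getD j A = posFR b₂ n p.1.support j)
    (hP' : ∀ j, P'.1.support.getD j A = posFR b₂ n p'.1.support j) :
    (SPG (GN) A B).Adj P P' ↔ (SPG G₂ a₂ b₂).Adj p p' := by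
  constructor
  · rintro ⟨i, hne, hall⟩
    cases i with
    | zero =>
      exfalso
      apply hne
      rw [hP 0, hP' 0]
      unfold posFR
      rw [if_pos rfl, if_pos rfl]
    | succ i =>
      refine ⟨i, ?_, ?_⟩
      · intro hq
        apply hne
        rw [hP, hP']
        exact (posFR_eq_iff hdd₂ hn3 p p' i).mpr hq
      · intro j hj
        have hx := hall (j + 1) (by omega)
        rw [hP, hP'] at hx
        exact (posFR_eq_iff hdd₂ hn3 p p' j).mp hx
  · rintro ⟨i, hne, hall⟩
    refine ⟨i + 1, ?_, ?_⟩
    · rw [hP, hP']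
      intro hx
      exact hne ((posFR_eq_iff hdd₂ hn3 p p' i).mp hx)
    · intro j hj
      rw [hP j, hP' j]
      cases j with
      | zero =>
        unfold posFR
        rw [if_pos rfl, if_pos rfl]
      | succ k =>
        exact (posFR_eq_iff hdd₂ hn3 p p' k).mpr (hall k (by omega))

lemma nadjSPG_LR (hn3 : 3 ≤ n)
    (P P' : Geodesic (GN) A B) (p : Geodesic G₁ a₁ b₁) (p' : Geodesic G₂ a₂ b₂)
    (hP : ∀ j, P.1.support.getD j A = posFL b₁ n p.1.support j)
    (hP' : ∀ j, P'.1.support.getD j A = posFR b₂ n p'.1.support j) :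
    ¬ (SPG (GN) A B).Adj P P' := by
  rintro ⟨i, hne, hall⟩
  have h1 : P.1.support.getD 1 A ≠ P'.1.support.getD 1 A := by
    rw [hP 1, hP' 1]
    unfold posFL posFR
    rw [if_neg one_ne_zero, if_neg one_ne_zero, if_pos (by omega), if_pos (by omega)]
    exact fun h => nomatch h
  have h2 : P.1.support.getD 2 A ≠ P'.1.support.getD 2 A := by
    rw [hP 2, hP' 2]
    unfold posFL posFR
    rw [if_neg (show ¬((2:ℕ) = 0) by omega), if_neg (show ¬((2:ℕ) = 0) by omega),
      if_pos (show 2 < n by omega), if_pos (show 2 < n by omega)]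
    exact fun h => nomatch h
  rcases eq_or_ne i 1 with rfl | hi
  · exact h2 (hall 2 (by omega))
  · exact h1 (hall 1 (Ne.symm hi))

end SPGU


theorem stmt5 {α β : Type*} (H₁ : SimpleGraph α) (H₂ : SimpleGraph β)
    (h₁ : IsSPGraph H₁) (h₂ : IsSPGraph H₂) : IsSPGraph (H₁ ⊕g H₂) := by
  classical
  obtain ⟨V₁, G₁, a₁, b₁, hab₁, ⟨e₁⟩⟩ := h₁
  obtain ⟨V₂, G₂, a₂, b₂, hab₂, ⟨e₂⟩⟩ := h₂
  set n : ℕ := G₁.dist a₁ b₁ + G₂.dist a₂ b₂ + 3 with hn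
  refine ⟨SPGU.NV V₁ V₂,
    SPGU.Gnew G₁ G₂ a₁ b₁ a₂ b₂ (G₁.dist a₁ b₁) (G₂.dist a₂ b₂) n,
    SPGU.NV.A, SPGU.NV.B, fun h => (nomatch h), ?_⟩
  have HL := fun p => SPGU.forwardL (G₁ := G₁) (G₂ := G₂) (a₁ := a₁) (b₁ := b₁) (a₂ := a₂)
    (b₂ := b₂) (d₁ := G₁.dist a₁ b₁) (d₂ := G₂.dist a₂ b₂) (n := n) rfl (by omega) p
  have HR := fun p => SPGU.forwardR (G₁ := G₁) (G₂ := G₂) (a₁ := a₁) (b₁ := b₁) (a₂ := a₂)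
    (b₂ := b₂) (d₁ := G₁.dist a₁ b₁) (d₂ := G₂.dist a₂ b₂) (n := n) rfl (by omega) p
  choose fL hfL using HL
  choose fR hfR using HR
  have hbij : Function.Bijective (Sum.elim fL fR) := by
    constructor
    · rintro (p | p) (p' | p') h
      · simp only [Sum.elim_inl] at h
        exact congrArg Sum.inl (SPGU.posFL_inj (n := n) rfl (by omega) p p'
          (fun j => by rw [← hfL p j, h, hfL p' j]))
      · simp only [Sum.elim_inl, Sum.elim_inr] at h
        have hx : SPGU.posFL (V₂ := V₂) b₁ n p.1.support 1 = SPGU.posFR b₂ n p'.1.support 1 := by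
          rw [← hfL p 1, h, hfR p' 1]
        exact absurd hx fun hx => SPGU.posF_cross (by omega) _ _ hx
      · simp only [Sum.elim_inl, Sum.elim_inr] at h
        have hx : SPGU.posFL (V₂ := V₂) b₁ n p'.1.support 1 = SPGU.posFR b₂ n p.1.support 1 := by
          rw [← hfL p' 1, ← h, hfR p 1]
        exact absurd hx fun hx => SPGU.posF_cross (by omega) _ _ hx
      · simp only [Sum.elim_inr] at h
        exact congrArg Sum.inr (SPGU.posFR_inj (n := n) rfl (by omega) p p'
          (fun j => by rw [← hfR p j, h, hfR p' j]))
    · intro P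
      rcases SPGU.backward hab₁ hab₂ rfl rfl (by omega) (by omega) P with ⟨p, hp⟩ | ⟨p, hp⟩
      · exact ⟨Sum.inl p, SPGU.geo_ext _ _ (fun j => by rw [Sum.elim_inl, hfL p j, ← hp j])⟩
      · exact ⟨Sum.inr p, SPGU.geo_ext _ _ (fun j => by rw [Sum.elim_inr, hfR p j, ← hp j])⟩
  refine ⟨⟨(Equiv.sumCongr e₁.toEquiv e₂.toEquiv).trans (Equiv.ofBijective _ hbij),
    @fun x y => ?_⟩⟩
  cases x with
  | inl x =>
    cases y with
    | inl y =>
      simp only [Equiv.trans_apply, Equiv.sumCongr_apply, Sum.map_inl,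
        Equiv.ofBijective_apply, Sum.elim_inl]
      rw [SPGU.adjSPG_LL rfl (by omega) _ _ _ _ (hfL _) (hfL _)]
      exact e₁.map_rel_iff
    | inr y =>
      simp only [Equiv.trans_apply, Equiv.sumCongr_apply, Sum.map_inl, Sum.map_inr,
        Equiv.ofBijective_apply, Sum.elim_inl, Sum.elim_inr]
      exact iff_of_false
        (SPGU.nadjSPG_LR (by omega) _ _ _ _ (hfL _) (hfR _))
        (by simp [SimpleGraph.sum_adj])
  | inr x =>
    cases y with
    | inl y =>
      simp only [Equiv.trans_apply, Equiv.sumCongr_apply, Sum.map_inl, Sum.map_inr,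
        Equiv.ofBijective_apply, Sum.elim_inl, Sum.elim_inr]
      refine iff_of_false (fun h => ?_) (by simp [SimpleGraph.sum_adj])
      exact SPGU.nadjSPG_LR (by omega) _ _ _ _ (hfL _) (hfR _) h.symm
    | inr y =>
      simp only [Equiv.trans_apply, Equiv.sumCongr_apply, Sum.map_inr,
        Equiv.ofBijective_apply, Sum.elim_inr]
      rw [SPGU.adjSPG_RR rfl (by omega) _ _ _ _ (hfR _) (hfR _)]
      exact e₂.map_rel_iff
end

section
/- Let G be connected with a,b ∈ V(G), d(a,b) ≥ 2, and let v be a vertex lying on at least one a,b-geodesic. Then the subgraph of S(G,a,b) induced by the vertices corresponding to a,b-geodesics containing v is isomorphic to the Cartesian product S(G,a,v) □ S(G,v,b). -/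
open SimpleGraph

section Helpers

variable {V : Type*} {G : SimpleGraph V}

lemma myWalkExt : ∀ {a b : V} (p q : G.Walk a b),
    p.length = q.length → (∀ i, p.getVert i = q.getVert i) → p = q := by
  intro a b p
  induction p with
  | nil =>
    intro q hl _
    exact ((Walk.nil_iff_length_eq.mpr hl.symm).eq_nil).symm
  | @cons a c b h p ih =>
    intro q hl hv
    have hq : ¬ q.Nil := by
      rw [Walk.nil_iff_length_eq]
      rw [Walk.length_cons] at hl
      omega
    have hc : q.getVert 1 = c := by
      have := (hv 1).symm
      rwa [Walk.getVert_cons_succ, Walk.getVert_zero] at this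
    subst hc
    conv_rhs => rw [← Walk.cons_tail_eq q hq]
    have hlen : p.length = q.tail.length := by
      have h2 := Walk.length_tail_add_one hq
      rw [Walk.length_cons] at hl
      omega
    have hvv : ∀ i, p.getVert i = q.tail.getVert i := by
      intro i
      rw [Walk.getVert_tail]
      have := hv (i + 1)
      rwa [Walk.getVert_cons_succ] at this
    rw [ih q.tail hlen hvv]

lemma mySupportGetD : ∀ {a b : V} (p : G.Walk a b) (j : ℕ), j ≤ p.length →
    ∀ x, p.support.getD j x = p.getVert j := by
  intro a b p
  induction p with
  | nil => intro j hj x; simp [Nat.le_zero.mp hj]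
  | @cons a c b h p ih =>
    intro j hj x
    cases j with
    | zero => simp
    | succ j =>
      rw [Walk.support_cons, Walk.getVert_cons_succ]
      simp only [List.getD_cons_succ]
      exact ih j (by simpa using hj) x

lemma mySupportGetD' {a b : V} (p : G.Walk a b) {j : ℕ} (hj : p.length < j) (x : V) :
    p.support.getD j x = x := by
  apply List.getD_eq_default
  rw [Walk.length_support]
  omega

variable [DecidableEq V]

lemma myGetVertTakeUntil {a b v : V} (p : G.Walk a b) (h : v ∈ p.support) {i : ℕ}
    (hi : i ≤ (p.takeUntil v h).length) : (p.takeUntil v h).getVert i = p.getVert i := by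
  conv_rhs => rw [← Walk.take_spec p h]
  rw [Walk.getVert_append]
  rcases lt_or_eq_of_le hi with h' | h'
  · rw [if_pos h']
  · rw [if_neg (by omega), h', Nat.sub_self, Walk.getVert_zero, Walk.getVert_length]

lemma myGetVertDropUntil {a b v : V} (p : G.Walk a b) (h : v ∈ p.support) (i : ℕ) :
    (p.dropUntil v h).getVert i = p.getVert ((p.takeUntil v h).length + i) := by
  have h2 := Walk.getVert_append (p.takeUntil v h) (p.dropUntil v h)
    ((p.takeUntil v h).length + i)
  rw [Walk.take_spec] at h2
  rw [h2, if_neg (by omega)]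
  congr 1
  omega

lemma myLenSplit {a b v : V} (p : G.Walk a b) (h : v ∈ p.support) :
    (p.takeUntil v h).length + (p.dropUntil v h).length = p.length := by
  conv_rhs => rw [← Walk.take_spec p h]
  rw [Walk.length_append]

end Helpers

theorem stmt6 {V : Type*} (G : SimpleGraph V) (a b v : V) (hconn : G.Connected)
    (hd : 2 ≤ G.dist a b) (hv : ∃ U : Geodesic G a b, v ∈ U.1.support) :
    Nonempty (((SPG G a b).induce {U : Geodesic G a b | v ∈ U.1.support}) ≃g
      (SPG G a v □ SPG G v b)) := by
  classical
  obtain ⟨U₀, hU₀⟩ := hv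
  have htri : G.dist a b ≤ G.dist a v + G.dist v b := hconn.dist_triangle
  have hkm : G.dist a v + G.dist v b = G.dist a b := by
    have h1 := SimpleGraph.dist_le (U₀.1.takeUntil v hU₀)
    have h2 := SimpleGraph.dist_le (U₀.1.dropUntil v hU₀)
    have h3 := myLenSplit U₀.1 hU₀
    have h4 := U₀.2.2
    omega
  have hsplit : ∀ (p : G.Walk a b), p.length = G.dist a b → ∀ (h : v ∈ p.support),
      (p.takeUntil v h).length = G.dist a v ∧ (p.dropUntil v h).length = G.dist v b := by
    intro p hp h
    have h1 := SimpleGraph.dist_le (p.takeUntil v h)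
    have h2 := SimpleGraph.dist_le (p.dropUntil v h)
    have h3 := myLenSplit p h
    omega
  -- getVert of take/drop in terms of the whole walk
  have hgvt : ∀ (p : G.Walk a b) (hp : p.length = (G.dist a b)) (h : v ∈ p.support) {j : ℕ}, j ≤ (G.dist a v) →
      (p.takeUntil v h).getVert j = p.getVert j := by
    intro p hp h j hj
    exact myGetVertTakeUntil p h (by rw [(hsplit p hp h).1]; exact hj)
  have hgvd : ∀ (p : G.Walk a b) (hp : p.length = (G.dist a b)) (h : v ∈ p.support) (j : ℕ),
      (p.dropUntil v h).getVert j = p.getVert (G.dist a v + j) := by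
    intro p hp h j
    rw [myGetVertDropUntil p h j, (hsplit p hp h).1]
  have hvK : ∀ (p : G.Walk a b) (hp : p.length = (G.dist a b)) (h : v ∈ p.support),
      p.getVert (G.dist a v) = v := by
    intro p hp h
    have h1 := myGetVertTakeUntil p h (i := (p.takeUntil v h).length) le_rfl
    rw [Walk.getVert_length, (hsplit p hp h).1] at h1
    exact h1.symm
  -- the forward map
  refine ⟨?_⟩
  refine
    { toFun := fun U =>
        (⟨U.1.1.takeUntil v U.2, U.1.2.1.takeUntil U.2, (hsplit U.1.1 U.1.2.2 U.2).1⟩,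
         ⟨U.1.1.dropUntil v U.2, U.1.2.1.dropUntil U.2, (hsplit U.1.1 U.1.2.2 U.2).2⟩),
      invFun := fun PQ =>
        ⟨⟨PQ.1.1.append PQ.2.1,
          Walk.isPath_of_length_eq_dist _
            (by rw [Walk.length_append, PQ.1.2.2, PQ.2.2.2]; exact hkm),
          by rw [Walk.length_append, PQ.1.2.2, PQ.2.2.2]; exact hkm⟩,
         by
          show v ∈ (PQ.1.1.append PQ.2.1).support
          rw [Walk.mem_support_append_iff]
          exact Or.inl (Walk.end_mem_support _)⟩,
      left_inv := by
        intro U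
        exact Subtype.ext (Subtype.ext (Walk.take_spec U.1.1 U.2))
      right_inv := by
        rintro ⟨P, Q⟩
        dsimp only
        have hUlen : (P.1.append Q.1).length = (G.dist a b) := by
          rw [Walk.length_append, P.2.2, Q.2.2]; exact hkm
        have hmem : v ∈ (P.1.append Q.1).support := by
          rw [Walk.mem_support_append_iff]
          exact Or.inl (Walk.end_mem_support _)
        have hPlen := P.2.2
        have hQlen := Q.2.2
        refine Prod.ext (Subtype.ext (myWalkExt _ _ ?_ ?_)) (Subtype.ext (myWalkExt _ _ ?_ ?_))
        · rw [(hsplit _ hUlen _).1, hPlen]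
        · intro i
          rcases le_or_gt i (G.dist a v) with hi | hi
          · rw [hgvt _ hUlen _ hi, Walk.getVert_append]
            rcases lt_or_eq_of_le hi with h' | h'
            · rw [if_pos (by omega)]
            · rw [if_neg (by omega), show i - P.1.length = 0 from by omega,
                Walk.getVert_zero, h']
              have hPv := Walk.getVert_length P.1
              rw [hPlen] at hPv
              exact hPv.symm
          · rw [Walk.getVert_of_length_le _ (by rw [(hsplit _ hUlen _).1]; omega),
              Walk.getVert_of_length_le _ (by rw [hPlen]; omega)]
        · rw [(hsplit _ hUlen _).2, hQlen]
        · intro i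
          rw [hgvd _ hUlen _ i, Walk.getVert_append, if_neg (by omega), hPlen]
          congr 1
          omega
      map_rel_iff' := by
        rintro ⟨⟨p, hpp, hpK⟩, hU⟩ ⟨⟨q, hqp, hqK⟩, hW⟩
        simp only [Equiv.coe_fn_mk, SimpleGraph.boxProd_adj, SimpleGraph.comap_adj,
          Function.Embedding.coe_subtype]
        have hU' : v ∈ p.support := hU
        have hW' : v ∈ q.support := hW
        have hKN : (G.dist a v) ≤ (G.dist a b) := by omega
        have htp := (hsplit p hpK hU').1
        have hdp := (hsplit p hpK hU').2
        have htq := (hsplit q hqK hW').1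
        have hdq := (hsplit q hqK hW').2
        constructor
        · -- box adjacency → original adjacency
          rintro (⟨⟨i, hne, hagree⟩, heq2⟩ | ⟨⟨i, hne, hagree⟩, heq1⟩)
          · -- takes differ at i, drops equal
            have hne' : (p.takeUntil v hU').support.getD i a ≠
                (q.takeUntil v hW').support.getD i a := hne
            have hagree' : ∀ j, j ≠ i → (p.takeUntil v hU').support.getD j a =
                (q.takeUntil v hW').support.getD j a := hagree
            have heqd : p.dropUntil v hU' = q.dropUntil v hW' := congrArg Subtype.val heq2
            have hiK : i ≤ G.dist a v := by
              by_contra hik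
              apply hne'
              rw [mySupportGetD' (p.takeUntil v hU') (by omega) a,
                mySupportGetD' (q.takeUntil v hW') (by omega) a]
            refine ⟨i, ?_, ?_⟩
            · show p.support.getD i a ≠ q.support.getD i a
              rw [mySupportGetD p i (by omega) a, mySupportGetD q i (by omega) a,
                ← hgvt p hpK hU' hiK, ← hgvt q hqK hW' hiK,
                ← mySupportGetD (p.takeUntil v hU') i (by omega) a,
                ← mySupportGetD (q.takeUntil v hW') i (by omega) a]
              exact hne'
            · intro j hj
              show p.support.getD j a = q.support.getD j a
              rcases le_or_gt j (G.dist a v) with hjK | hjK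
              · rw [mySupportGetD p j (by omega) a, mySupportGetD q j (by omega) a,
                  ← hgvt p hpK hU' hjK, ← hgvt q hqK hW' hjK,
                  ← mySupportGetD (p.takeUntil v hU') j (by omega) a,
                  ← mySupportGetD (q.takeUntil v hW') j (by omega) a]
                exact hagree' j hj
              · rcases le_or_gt j (G.dist a b) with hjN | hjN
                · rw [mySupportGetD p j (by omega) a, mySupportGetD q j (by omega) a]
                  have e1 := hgvd p hpK hU' (j - G.dist a v)
                  have e2 := hgvd q hqK hW' (j - G.dist a v)
                  rw [show G.dist a v + (j - G.dist a v) = j by omega] at e1 e2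
                  rw [← e1, ← e2, heqd]
                · rw [mySupportGetD' p (by omega) a, mySupportGetD' q (by omega) a]
          · -- drops differ at i, takes equal
            have hne' : (p.dropUntil v hU').support.getD i v ≠
                (q.dropUntil v hW').support.getD i v := hne
            have hagree' : ∀ j, j ≠ i → (p.dropUntil v hU').support.getD j v =
                (q.dropUntil v hW').support.getD j v := hagree
            have heqt : p.takeUntil v hU' = q.takeUntil v hW' := congrArg Subtype.val heq1
            have hiM : i ≤ G.dist v b := by
              by_contra hik
              apply hne'
              rw [mySupportGetD' (p.dropUntil v hU') (by omega) v,
                mySupportGetD' (q.dropUntil v hW') (by omega) v]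
            have hi1 : 1 ≤ i := by
              rcases Nat.eq_zero_or_pos i with rfl | h1
              · exfalso
                apply hne'
                rw [mySupportGetD (p.dropUntil v hU') 0 (by omega) v,
                  mySupportGetD (q.dropUntil v hW') 0 (by omega) v,
                  Walk.getVert_zero, Walk.getVert_zero]
              · exact h1
            refine ⟨G.dist a v + i, ?_, ?_⟩
            · show p.support.getD (G.dist a v + i) a ≠ q.support.getD (G.dist a v + i) a
              rw [mySupportGetD p (G.dist a v + i) (by omega) a,
                mySupportGetD q (G.dist a v + i) (by omega) a,
                ← hgvd p hpK hU' i, ← hgvd q hqK hW' i,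
                ← mySupportGetD (p.dropUntil v hU') i (by omega) v,
                ← mySupportGetD (q.dropUntil v hW') i (by omega) v]
              exact hne'
            · intro j hj
              show p.support.getD j a = q.support.getD j a
              rcases le_or_gt j (G.dist a v) with hjK | hjK
              · rw [mySupportGetD p j (by omega) a, mySupportGetD q j (by omega) a,
                  ← hgvt p hpK hU' hjK, ← hgvt q hqK hW' hjK, heqt]
              · rcases le_or_gt j (G.dist a b) with hjN | hjN
                · rw [mySupportGetD p j (by omega) a, mySupportGetD q j (by omega) a]
                  have e1 := hgvd p hpK hU' (j - G.dist a v)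
                  have e2 := hgvd q hqK hW' (j - G.dist a v)
                  rw [show G.dist a v + (j - G.dist a v) = j by omega] at e1 e2
                  rw [← e1, ← e2,
                    ← mySupportGetD (p.dropUntil v hU') (j - G.dist a v) (by omega) v,
                    ← mySupportGetD (q.dropUntil v hW') (j - G.dist a v) (by omega) v]
                  exact hagree' (j - G.dist a v) (by omega)
                · rw [mySupportGetD' p (by omega) a, mySupportGetD' q (by omega) a]
        · -- original adjacency → box adjacency
          rintro ⟨i, hne, hagree⟩
          have hne' : p.support.getD i a ≠ q.support.getD i a := hne
          have hagree' : ∀ j, j ≠ i → p.support.getD j a = q.support.getD j a := hagree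
          have hiN : i ≤ G.dist a b := by
            by_contra hik
            apply hne'
            rw [mySupportGetD' p (by omega) a, mySupportGetD' q (by omega) a]
          have hinK : i ≠ G.dist a v := by
            intro h
            apply hne'
            rw [h, mySupportGetD p (G.dist a v) (by omega) a,
              mySupportGetD q (G.dist a v) (by omega) a, hvK p hpK hU', hvK q hqK hW']
          rcases lt_or_gt_of_ne hinK with hiK | hiK
          · -- difference in the take part
            refine Or.inl ⟨⟨i, ?_, ?_⟩, ?_⟩
            · show (p.takeUntil v hU').support.getD i a ≠ (q.takeUntil v hW').support.getD i a
              rw [mySupportGetD (p.takeUntil v hU') i (by omega) a,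
                mySupportGetD (q.takeUntil v hW') i (by omega) a,
                hgvt p hpK hU' (by omega : i ≤ G.dist a v), hgvt q hqK hW' (by omega),
                ← mySupportGetD p i (by omega) a, ← mySupportGetD q i (by omega) a]
              exact hne'
            · intro j hj
              show (p.takeUntil v hU').support.getD j a = (q.takeUntil v hW').support.getD j a
              rcases le_or_gt j (G.dist a v) with hjK | hjK
              · rw [mySupportGetD (p.takeUntil v hU') j (by omega) a,
                  mySupportGetD (q.takeUntil v hW') j (by omega) a,
                  hgvt p hpK hU' hjK, hgvt q hqK hW' hjK,
                  ← mySupportGetD p j (by omega) a, ← mySupportGetD q j (by omega) a]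
                exact hagree' j hj
              · rw [mySupportGetD' (p.takeUntil v hU') (by omega) a,
                  mySupportGetD' (q.takeUntil v hW') (by omega) a]
            · refine Subtype.ext (myWalkExt _ _ ?_ ?_)
              · rw [hdp, hdq]
              · intro j
                rcases le_or_gt j (G.dist v b) with hjM | hjM
                · rw [hgvd p hpK hU' j, hgvd q hqK hW' j,
                    ← mySupportGetD p (G.dist a v + j) (by omega) a,
                    ← mySupportGetD q (G.dist a v + j) (by omega) a]
                  exact hagree' (G.dist a v + j) (by omega)
                · rw [Walk.getVert_of_length_le _ (by omega : (p.dropUntil v hU').length ≤ j),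
                    Walk.getVert_of_length_le _ (by omega : (q.dropUntil v hW').length ≤ j)]
          · -- difference in the drop part
            refine Or.inr ⟨⟨i - G.dist a v, ?_, ?_⟩, ?_⟩
            · show (p.dropUntil v hU').support.getD (i - G.dist a v) v ≠
                (q.dropUntil v hW').support.getD (i - G.dist a v) v
              rw [mySupportGetD (p.dropUntil v hU') (i - G.dist a v) (by omega) v,
                mySupportGetD (q.dropUntil v hW') (i - G.dist a v) (by omega) v,
                hgvd p hpK hU' (i - G.dist a v), hgvd q hqK hW' (i - G.dist a v),
                show G.dist a v + (i - G.dist a v) = i by omega,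
                ← mySupportGetD p i (by omega) a, ← mySupportGetD q i (by omega) a]
              exact hne'
            · intro j hj
              show (p.dropUntil v hU').support.getD j v = (q.dropUntil v hW').support.getD j v
              rcases le_or_gt j (G.dist v b) with hjM | hjM
              · rw [mySupportGetD (p.dropUntil v hU') j (by omega) v,
                  mySupportGetD (q.dropUntil v hW') j (by omega) v,
                  hgvd p hpK hU' j, hgvd q hqK hW' j,
                  ← mySupportGetD p (G.dist a v + j) (by omega) a,
                  ← mySupportGetD q (G.dist a v + j) (by omega) a]
                exact hagree' (G.dist a v + j) (by omega)
              · rw [mySupportGetD' (p.dropUntil v hU') (by omega) v,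
                  mySupportGetD' (q.dropUntil v hW') (by omega) v]
            · refine Subtype.ext (myWalkExt _ _ ?_ ?_)
              · rw [htp, htq]
              · intro j
                rcases le_or_gt j (G.dist a v) with hjK | hjK
                · rw [hgvt p hpK hU' hjK, hgvt q hqK hW' hjK,
                    ← mySupportGetD p j (by omega) a, ← mySupportGetD q j (by omega) a]
                  exact hagree' j (by omega)
                · rw [Walk.getVert_of_length_le _ (by omega : (p.takeUntil v hU').length ≤ j),
                    Walk.getVert_of_length_le _ (by omega : (q.takeUntil v hW').length ≤ j)] }
end

section
/- In any shortest path graph H = S(G,a,b), if U_1 U_2 U_3 is an induced path in H whose edges U_1U_2 and U_2U_3 have difference indices i and j respectively with j ∉ {i−1, i, i+1}, then H contains an induced 4-cycle containing the path U_1 U_2 U_3. -/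
open SimpleGraph

section Aux
variable {V : Type*} [DecidableEq V] {G : SimpleGraph V} {v w : V}

lemma aux_support_takeUntil_eq (p : G.Walk v w) (u : V) (h : u ∈ p.support) :
    (p.takeUntil u h).support = p.support.take (p.support.idxOf u + 1) := by
  induction p with
  | nil =>
      rw [Walk.mem_support_nil_iff] at h
      subst h
      simp [Walk.takeUntil]
  | @cons x y z r q ih =>
      by_cases hx : x = u
      · subst hx
        simp [Walk.takeUntil]
      · rw [Walk.support_cons, List.idxOf_cons_ne _ (by simpa using hx)]
        simp only [Walk.takeUntil, dif_neg hx, Walk.support_cons, List.take_succ_cons]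
        rw [ih]

lemma aux_length_takeUntil_eq (p : G.Walk v w) (u : V) (h : u ∈ p.support) :
    (p.takeUntil u h).length = p.support.idxOf u := by
  have h1 := congrArg List.length (aux_support_takeUntil_eq p u h)
  rw [Walk.length_support, List.length_take, Walk.length_support] at h1
  have h2 : p.support.idxOf u < p.support.length := List.idxOf_lt_length_iff.2 h
  rw [Walk.length_support] at h2
  omega

lemma aux_tail_support_dropUntil_eq (p : G.Walk v w) (u : V) (h : u ∈ p.support) :
    (p.dropUntil u h).support.tail = p.support.drop (p.support.idxOf u + 1) := by
  have hsp : p.support = (p.takeUntil u h).support ++ (p.dropUntil u h).support.tail := by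
    rw [← Walk.support_append, Walk.take_spec]
  have hlen : (p.takeUntil u h).support.length = p.support.idxOf u + 1 := by
    rw [Walk.length_support, aux_length_takeUntil_eq]
  have := (List.drop_left (l₁ := (p.takeUntil u h).support) (l₂ := (p.dropUntil u h).support.tail)).symm
  rw [← hsp, hlen] at this
  exact this

end Aux

lemma aux_glue {V : Type*} [DecidableEq V] {G : SimpleGraph V} {a b : V}
    (P Q : Geodesic G a b) (m : ℕ) (hm : m ≤ G.dist a b)
    (hPQ : P.1.support.getD m a = Q.1.support.getD m a) :
    ∃ R : Geodesic G a b, ∀ k, R.1.support.getD k a =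
      if k ≤ m then P.1.support.getD k a else Q.1.support.getD k a := by
  set n := G.dist a b with hn
  have hPlen : P.1.support.length = n + 1 := by rw [Walk.length_support, P.2.2]
  have hQlen : Q.1.support.length = n + 1 := by rw [Walk.length_support, Q.2.2]
  have hmP : m < P.1.support.length := by omega
  have hmQ : m < Q.1.support.length := by omega
  set v := P.1.support.getD m a with hv
  have hvgP : v = P.1.support[m] := List.getD_eq_getElem _ _ hmP
  have hvgQ : v = Q.1.support[m] := hPQ.trans (List.getD_eq_getElem _ _ hmQ)
  have hvP : v ∈ P.1.support := hvgP ▸ List.getElem_mem hmP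
  have hvQ : v ∈ Q.1.support := hvgQ ▸ List.getElem_mem hmQ
  have idxP : P.1.support.idxOf v = m := by
    rw [hvgP]; exact P.2.1.support_nodup.idxOf_getElem m hmP
  have idxQ : Q.1.support.idxOf v = m := by
    rw [hvgQ]; exact Q.2.1.support_nodup.idxOf_getElem m hmQ
  have htPlen : (P.1.takeUntil v hvP).length = m := by rw [aux_length_takeUntil_eq, idxP]
  have hdQlen : (Q.1.dropUntil v hvQ).length = n - m := by
    have := congrArg Walk.length (Walk.take_spec Q.1 hvQ)
    rw [Walk.length_append, aux_length_takeUntil_eq, idxQ, Q.2.2] at this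
    omega
  set W : G.Walk a b := (P.1.takeUntil v hvP).append (Q.1.dropUntil v hvQ) with hW
  have hWlen : W.length = n := by rw [hW, Walk.length_append, htPlen, hdQlen]; omega
  have hWpath : W.IsPath := W.isPath_of_length_eq_dist hWlen
  have hWsup : W.support = P.1.support.take (m + 1) ++ Q.1.support.drop (m + 1) := by
    rw [hW, Walk.support_append, aux_support_takeUntil_eq, idxP,
      aux_tail_support_dropUntil_eq, idxQ]
  refine ⟨⟨W, hWpath, hWlen⟩, fun k => ?_⟩
  simp only [hWsup]
  have hlen1 : (P.1.support.take (m + 1)).length = m + 1 := by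
    rw [List.length_take]; omega
  by_cases hk : k ≤ m
  · rw [if_pos hk, List.getD_append _ _ _ _ (by omega),
      List.getD_eq_getElem _ _ (by omega),
      List.getD_eq_getElem _ _ (by omega : k < P.1.support.length), List.getElem_take]
  · rw [if_neg hk, List.getD_append_right _ _ _ _ (by omega), hlen1]
    rw [List.getD_eq_getElem?_getD, List.getD_eq_getElem?_getD, List.getElem?_drop]
    congr 2
    omega

lemma aux_diff_bounds {V : Type*} {G : SimpleGraph V} {a b : V} {U W : Geodesic G a b} {i : ℕ}
    (h : U.1.support.getD i a ≠ W.1.support.getD i a) : 1 ≤ i ∧ i < G.dist a b := by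
  set n := G.dist a b with hn
  have hU : U.1.support.length = n + 1 := by rw [Walk.length_support, U.2.2]
  have hW : W.1.support.length = n + 1 := by rw [Walk.length_support, W.2.2]
  have h0 : i ≠ 0 := by
    rintro rfl
    apply h
    rw [U.1.support_eq_cons, W.1.support_eq_cons]
    simp
  have hle : i ≤ n := by
    by_contra hc
    exact h ((List.getD_eq_default _ _ (by omega)).trans
      (List.getD_eq_default _ _ (by omega)).symm)
  have e1 : U.1.support.getD n a = b := by
    rw [List.getD_eq_getElem _ _ (by omega)]
    have h1 := U.1.getLast_support
    rw [List.getLast_eq_getElem] at h1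
    simp only [hU, Nat.add_sub_cancel] at h1
    exact h1
  have e2 : W.1.support.getD n a = b := by
    rw [List.getD_eq_getElem _ _ (by omega)]
    have h1 := W.1.getLast_support
    rw [List.getLast_eq_getElem] at h1
    simp only [hW, Nat.add_sub_cancel] at h1
    exact h1
  have hnn : i ≠ n := fun hi => h (by rw [hi, e1, e2])
  omega

theorem stmt11 {V : Type*} (G : SimpleGraph V) (a b : V)
    (U₁ U₂ U₃ : Geodesic G a b) (i j : ℕ)
    (h12 : (SPG G a b).Adj U₁ U₂) (h23 : (SPG G a b).Adj U₂ U₃)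
    (h13 : ¬ (SPG G a b).Adj U₁ U₃) (hne : U₁ ≠ U₃)
    (hd12 : DiffAt U₁ U₂ i) (hd23 : DiffAt U₂ U₃ j)
    (hj1 : j + 1 ≠ i) (hj2 : j ≠ i) (hj3 : j ≠ i + 1) :
    ∃ U₄ : Geodesic G a b, U₄ ≠ U₁ ∧ U₄ ≠ U₂ ∧ U₄ ≠ U₃ ∧
      (SPG G a b).Adj U₃ U₄ ∧ (SPG G a b).Adj U₄ U₁ ∧ ¬ (SPG G a b).Adj U₂ U₄ := by
  classical
  obtain ⟨hi1, hi2⟩ := aux_diff_bounds hd12.1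
  obtain ⟨hj1', hj2'⟩ := aux_diff_bounds hd23.1
  -- common final step
  suffices H : ∀ R : Geodesic G a b, DiffAt U₃ R i → DiffAt R U₁ j →
      (∃ U₄ : Geodesic G a b, U₄ ≠ U₁ ∧ U₄ ≠ U₂ ∧ U₄ ≠ U₃ ∧
        (SPG G a b).Adj U₃ U₄ ∧ (SPG G a b).Adj U₄ U₁ ∧ ¬ (SPG G a b).Adj U₂ U₄) by
    rcases lt_or_gt_of_ne hj2 with hij | hij
    · -- j < i : glue U₃ then U₁ at j+1
      obtain ⟨R, hR⟩ := aux_glue U₃ U₁ (j + 1) (by omega) (by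
        rw [← hd23.2 (j + 1) (by omega), hd12.2 (j + 1) (by omega)])
      refine H R ⟨?_, ?_⟩ ⟨?_, ?_⟩
      · rw [hR i, if_neg (by omega), ← hd23.2 i (by omega)]
        exact hd12.1.symm
      · intro k hk
        rw [hR k]
        by_cases hkm : k ≤ j + 1
        · rw [if_pos hkm]
        · rw [if_neg hkm]
          exact ((hd12.2 k hk).trans (hd23.2 k (by omega))).symm
      · rw [hR j, if_pos (by omega)]
        exact fun he => hd23.1 ((hd12.2 j hj2).symm.trans he.symm)
      · intro k hk
        rw [hR k]
        by_cases hkm : k ≤ j + 1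
        · rw [if_pos hkm]
          exact ((hd12.2 k (by omega)).trans (hd23.2 k hk)).symm
        · rw [if_neg hkm]
    · -- i < j : glue U₁ then U₃ at i+1
      obtain ⟨R, hR⟩ := aux_glue U₁ U₃ (i + 1) (by omega) (by
        rw [hd12.2 (i + 1) (by omega), hd23.2 (i + 1) (by omega)])
      refine H R ⟨?_, ?_⟩ ⟨?_, ?_⟩
      · rw [hR i, if_pos (by omega)]
        exact fun he => hd12.1 (he.symm.trans (hd23.2 i (by omega)).symm)
      · intro k hk
        rw [hR k]
        by_cases hkm : k ≤ i + 1
        · rw [if_pos hkm]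
          exact ((hd12.2 k hk).trans (hd23.2 k (by omega))).symm
        · rw [if_neg hkm]
      · rw [hR j, if_neg (by omega)]
        exact fun he => hd23.1 ((hd12.2 j hj2).symm.trans he.symm)
      · intro k hk
        rw [hR k]
        by_cases hkm : k ≤ i + 1
        · rw [if_pos hkm]
        · rw [if_neg hkm]
          exact ((hd12.2 k (by omega)).trans (hd23.2 k hk)).symm
  intro R hd34 hd41
  have hRi : R.1.support.getD i a = U₁.1.support.getD i a := hd41.2 i (by omega)
  have hRj : U₃.1.support.getD j a = R.1.support.getD j a := hd34.2 j (by omega)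
  refine ⟨R, ?_, ?_, ?_, ⟨i, hd34⟩, ⟨j, hd41⟩, ?_⟩
  · exact fun he => hd41.1 (by rw [he])
  · intro he
    apply hd23.1
    rw [← he, ← hRj]
  · exact fun he => hd34.1 (by rw [he])
  · rintro ⟨k, hk1, hk2⟩
    have hki : k = i := by
      by_contra hc
      exact hd12.1 (((hk2 i (Ne.symm hc)).trans hRi).symm)
    have hkj : k = j := by
      by_contra hc
      exact hd23.1 ((hk2 j (Ne.symm hc)).trans hRj.symm)
    omega
end
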